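/- arXiv:2303.04680 — 3 statements merged into one kernel-verified Lean document; each statement's English description precedes it below -/
import Mathlib

section
/- Let d ≥ 1 be an integer, h ∈ (1/2, 1) and t ≥ 0. Then the function on ℝ^d given by x ↦ ∫_0^t ∏_{ℓ=1}^d (s - x_ℓ)_+^{(h-1)/d - 1/2} ds is square-integrable, i.e. it belongs to L²(ℝ^d). -/
open MeasureTheory Set

namespace HermiteAux

noncomputable section

variable {p : ℝ}

/-- the basic kernel factor -/
def phi (p y : ℝ) : ℝ := (max y 0) ^ p

lemma phi_nonneg (p y : ℝ) : 0 ≤ phi p y := Real.rpow_nonneg (le_max_right _ _) _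

lemma measurable_phi (p : ℝ) : Measurable (phi p) :=
  (measurable_id.max measurable_const).pow measurable_const

lemma phi_of_nonpos (hp : p ≠ 0) {y : ℝ} (hy : y ≤ 0) : phi p y = 0 := by
  simp [phi, max_eq_right hy, Real.zero_rpow hp]

lemma phi_of_pos {y : ℝ} (hy : 0 < y) : phi p y = y ^ p := by
  simp [phi, max_eq_left hy.le]

/-- the normalization constant -/
def Cst (p : ℝ) : ENNReal := ∫⁻ v : ℝ, ENNReal.ofReal (phi p v * phi p (1 + v))

lemma integrableOn_aux (hp : p ∈ Set.Ioo (-1 : ℝ) (-(1/2))) :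
    IntegrableOn (fun v => phi p v * phi p (1 + v)) (Ioi (0:ℝ)) := by
  have hp0 : p ≠ 0 := by nlinarith [hp.2]
  have hple : p ≤ 0 := by nlinarith [hp.2]
  have h1 : IntegrableOn (fun v => phi p v * phi p (1 + v)) (Ioc (0:ℝ) 1) := by
    have hg : IntegrableOn (fun v : ℝ => v ^ p) (Ioc (0:ℝ) 1) := by
      rw [integrableOn_Ioc_iff_integrableOn_Ioo]
      exact (intervalIntegral.integrableOn_Ioo_rpow_iff one_pos).2 hp.1
    refine Integrable.mono hg ?_ ?_
    · exact ((measurable_phi p).mul ((measurable_phi p).comp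
        (measurable_const.add measurable_id))).aestronglyMeasurable
    · filter_upwards [ae_restrict_mem measurableSet_Ioc] with v hv
      have hv0 : 0 < v := hv.1
      rw [Real.norm_eq_abs, Real.norm_eq_abs,
        abs_of_nonneg (mul_nonneg (phi_nonneg _ _) (phi_nonneg _ _)),
        abs_of_nonneg (Real.rpow_nonneg hv0.le _)]
      rw [phi_of_pos hv0, phi_of_pos (by linarith : (0:ℝ) < 1 + v)]
      calc v ^ p * (1 + v) ^ p ≤ v ^ p * 1 := by
            refine mul_le_mul_of_nonneg_left ?_ (by positivity)
            exact Real.rpow_le_one_of_one_le_of_nonpos (by linarith) hple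
        _ = v ^ p := mul_one _
  have h2 : IntegrableOn (fun v => phi p v * phi p (1 + v)) (Ioi (1:ℝ)) := by
    have hg : IntegrableOn (fun v : ℝ => v ^ (p + p)) (Ioi (1:ℝ)) := by
      refine (integrableOn_Ioi_rpow_iff one_pos).2 (by nlinarith [hp.2])
    refine Integrable.mono hg ?_ ?_
    · exact ((measurable_phi p).mul ((measurable_phi p).comp
        (measurable_const.add measurable_id))).aestronglyMeasurable
    · filter_upwards [ae_restrict_mem measurableSet_Ioi] with v hv
      have hv0 : (0:ℝ) < v := lt_trans one_pos hv
      rw [Real.norm_eq_abs, Real.norm_eq_abs,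
        abs_of_nonneg (mul_nonneg (phi_nonneg _ _) (phi_nonneg _ _)),
        abs_of_nonneg (Real.rpow_nonneg hv0.le _)]
      rw [phi_of_pos hv0, phi_of_pos (by linarith : (0:ℝ) < 1 + v), Real.rpow_add hv0]
      refine mul_le_mul_of_nonneg_left ?_ (by positivity)
      exact Real.rpow_le_rpow_of_nonpos hv0 (by linarith) hple
  have : Ioi (0:ℝ) = Ioc (0:ℝ) 1 ∪ Ioi 1 := (Ioc_union_Ioi_eq_Ioi zero_le_one).symm
  rw [this]
  exact h1.union h2

lemma Cst_lt_top (hp : p ∈ Set.Ioo (-1 : ℝ) (-(1/2))) : Cst p < ⊤ := by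
  have hp0 : p ≠ 0 := by nlinarith [hp.2]
  have hsupp : ∀ v : ℝ, v ≤ 0 → phi p v * phi p (1 + v) = 0 := by
    intro v hv; rw [phi_of_nonpos hp0 hv, zero_mul]
  have : Cst p = ∫⁻ v in Ioi (0:ℝ), ENNReal.ofReal (phi p v * phi p (1 + v)) := by
    rw [Cst, ← lintegral_add_compl _ (measurableSet_Ioi (a := (0:ℝ)))]
    have hz : ∫⁻ v in (Ioi (0:ℝ))ᶜ, ENNReal.ofReal (phi p v * phi p (1 + v)) = 0 := by
      rw [compl_Ioi]
      have hae : ∀ᵐ v ∂(volume.restrict (Iic (0:ℝ))),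
          ENNReal.ofReal (phi p v * phi p (1 + v)) = 0 := by
        filter_upwards [ae_restrict_mem measurableSet_Iic] with v hv
        simp [hsupp v hv]
      rw [lintegral_congr_ae hae, lintegral_zero]
    rw [hz, add_zero]
  rw [this]
  exact (integrableOn_aux hp).lintegral_lt_top

/-- change of variables for the one-dimensional cross term -/
lemma one_dim (hp : p ∈ Set.Ioo (-1 : ℝ) (-(1/2))) (s r : ℝ) (hr : 0 < r) :
    ∫⁻ x : ℝ, ENNReal.ofReal (phi p (s - x) * phi p (s + r - x))
      = ENNReal.ofReal (r ^ (2*p + 1)) * Cst p := by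
  have hmeas : Measurable fun u : ℝ => ENNReal.ofReal (phi p u * phi p (r + u)) :=
    (((measurable_phi p).mul ((measurable_phi p).comp
      (measurable_const.add measurable_id)))).ennreal_ofReal
  -- step 1: x ↦ s - x
  have mp1 : MeasurePreserving (fun x : ℝ => s - x) volume volume := by
    have := (measurePreserving_add_left (volume : Measure ℝ) s).comp
      (Measure.measurePreserving_neg (volume : Measure ℝ))
    simpa [Function.comp_def, sub_eq_add_neg] using this
  have step1 : ∫⁻ x : ℝ, ENNReal.ofReal (phi p (s - x) * phi p (s + r - x))
      = ∫⁻ u : ℝ, ENNReal.ofReal (phi p u * phi p (r + u)) := by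
    have := mp1.lintegral_comp hmeas
    rw [← this]
    congr 1
    ext x
    congr 2
    ring_nf
  -- step 2: scaling u = r v
  have hmap : Measure.map (fun x : ℝ => r * x) volume = ENNReal.ofReal |r⁻¹| • volume :=
    Real.map_volume_mul_left hr.ne'
  have step2 : ∫⁻ u : ℝ, ENNReal.ofReal (phi p u * phi p (r + u))
      = ENNReal.ofReal r * ∫⁻ v : ℝ, ENNReal.ofReal (phi p (r * v) * phi p (r + r * v)) := by
    have h1 : ∫⁻ v : ℝ, ENNReal.ofReal (phi p (r * v) * phi p (r + r * v))
        = ∫⁻ u, ENNReal.ofReal (phi p u * phi p (r + u)) ∂(Measure.map (fun x : ℝ => r * x) volume) := by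
      rw [lintegral_map hmeas (measurable_const_mul r)]
    rw [h1, hmap, lintegral_smul_measure, smul_eq_mul, ← mul_assoc, abs_of_pos (inv_pos.2 hr),
      ← ENNReal.ofReal_mul hr.le, mul_inv_cancel₀ hr.ne', ENNReal.ofReal_one, one_mul]
  -- compute phi p (r * v)
  have hphi_scale : ∀ v : ℝ, phi p (r * v) = r ^ p * phi p v := by
    intro v
    have hmax : r * max v 0 = max (r * v) 0 := by
      rw [mul_max_of_nonneg _ _ hr.le, mul_zero]
    rw [phi, ← hmax, Real.mul_rpow hr.le (le_max_right _ _)]; rfl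
  have step3 : ∀ v : ℝ, ENNReal.ofReal (phi p (r * v) * phi p (r + r * v))
      = ENNReal.ofReal (r ^ (p + p)) * ENNReal.ofReal (phi p v * phi p (1 + v)) := by
    intro v
    have h1v : r + r * v = r * (1 + v) := by ring
    rw [h1v, hphi_scale, hphi_scale]
    rw [show r ^ p * phi p v * (r ^ p * phi p (1 + v))
        = (r ^ p * r ^ p) * (phi p v * phi p (1 + v)) by ring, ← Real.rpow_add hr]
    rw [ENNReal.ofReal_mul (Real.rpow_nonneg hr.le _)]
  calc ∫⁻ x : ℝ, ENNReal.ofReal (phi p (s - x) * phi p (s + r - x))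
      = ENNReal.ofReal r * ∫⁻ v : ℝ, ENNReal.ofReal (phi p (r * v) * phi p (r + r * v)) := by
        rw [step1, step2]
    _ = ENNReal.ofReal r * (ENNReal.ofReal (r ^ (p + p)) * Cst p) := by
        rw [Cst]
        congr 1
        have hm2 : Measurable fun v : ℝ => ENNReal.ofReal (phi p v * phi p (1 + v)) :=
          ((measurable_phi p).mul ((measurable_phi p).comp
            (measurable_const.add measurable_id))).ennreal_ofReal
        simp_rw [step3]
        rw [lintegral_const_mul _ hm2]
    _ = ENNReal.ofReal (r ^ (2*p + 1)) * Cst p := by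
        rw [← mul_assoc, ← ENNReal.ofReal_mul hr.le]
        congr 2
        have e1 : r ^ (2*p + 1) = r ^ (1:ℝ) * r ^ (p + p) := by
          rw [← Real.rpow_add hr]; ring_nf
        rw [e1, Real.rpow_one, Real.rpow_add hr]

/-- lintegral of a product of one-variable functions over `ℝ^n`. -/
lemma lintegral_fin_prod_pow (n : ℕ) (f : ℝ → ENNReal) (hf : Measurable f) :
    ∫⁻ x : Fin n → ℝ, ∏ i, f (x i) = (∫⁻ y : ℝ, f y) ^ n := by
  induction n with
  | zero =>
      simp only [Finset.univ_eq_empty, Finset.prod_empty, pow_zero, lintegral_const, one_mul]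
      rw [show (volume : Measure (Fin 0 → ℝ)) = Measure.pi (fun _ => volume) from rfl]
      simp [Measure.pi_univ]
  | succ n ih =>
      have A := measurePreserving_piFinSuccAbove (fun _ : Fin (n+1) => (volume : Measure ℝ)) 0
      have hF : Measurable fun q : ℝ × (Fin n → ℝ) => f q.1 * ∏ i, f (q.2 i) :=
        (hf.comp measurable_fst).mul
          (Finset.measurable_prod _ fun i _ => hf.comp ((measurable_pi_apply i).comp measurable_snd))
      have key : ∫⁻ x : Fin (n+1) → ℝ, ∏ i, f (x i)
          = ∫⁻ q : ℝ × (Fin n → ℝ), f q.1 * ∏ i, f (q.2 i)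
            ∂((volume : Measure ℝ).prod (Measure.pi fun _ : Fin n => volume)) := by
        rw [show (volume : Measure (Fin (n+1) → ℝ)) = Measure.pi (fun _ => volume) from rfl,
          ← A.lintegral_comp hF]
        congr 1
        ext x
        simp only [MeasurableEquiv.piFinSuccAbove_apply]
        rw [Fin.prod_univ_succ]
        congr 1
      have hg2 : Measurable fun y : Fin n → ℝ => ∏ i, f (y i) :=
        Finset.measurable_prod _ fun i _ => hf.comp (measurable_pi_apply i)
      rw [key, lintegral_prod_mul hf.aemeasurable hg2.aemeasurable]
      rw [show (Measure.pi fun _ : Fin n => (volume : Measure ℝ)) = volume from rfl, ih, pow_succ]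
      ring

/-- the symmetric form of the one-dimensional cross term -/
lemma K_eq (hp : p ∈ Set.Ioo (-1 : ℝ) (-(1/2))) {s s' : ℝ} (hne : s ≠ s') :
    ∫⁻ y : ℝ, ENNReal.ofReal (phi p (s - y) * phi p (s' - y))
      = ENNReal.ofReal (|s' - s| ^ (2*p + 1)) * Cst p := by
  rcases hne.lt_or_gt with hlt | hlt
  · have := one_dim hp s (s' - s) (by linarith)
    rw [abs_of_pos (by linarith : (0:ℝ) < s' - s)]
    simpa using this
  · have := one_dim hp s' (s - s') (by linarith)
    rw [abs_of_neg (by linarith : s' - s < 0)]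
    simp_rw [mul_comm (phi p (s - _)) (phi p (s' - _))]
    have h2 : ∀ y : ℝ, s' + (s - s') - y = s - y := by intro y; ring
    simp_rw [h2] at this
    rw [this]
    norm_num

end

end HermiteAux

open HermiteAux

/-- The kernel of the Hermite process: for `h ∈ (1/2,1)` and `t ≥ 0`, the function
`x ↦ ∫_0^t ∏_ℓ (s - x_ℓ)_+^{(h-1)/d - 1/2} ds` is in `L²(ℝ^d)`. -/
theorem hermite_kernel_memL2 (d : ℕ) (hd : 1 ≤ d) (h : ℝ) (hh : h ∈ Set.Ioo (1/2 : ℝ) 1)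
    (t : ℝ) (ht : 0 ≤ t) :
    MemLp (fun x : Fin d → ℝ =>
        ∫ s in Set.Ioc (0:ℝ) t, ∏ ℓ, (max (s - x ℓ) 0) ^ ((h - 1) / d - 1/2)) 2
      (volume : Measure (Fin d → ℝ)) := by
  classical
  rcases eq_or_lt_of_le ht with rfl | ht0
  · simp only [Set.Ioc_self, Measure.restrict_empty, integral_zero_measure]
    exact (MemLp.zero : MemLp (0 : (Fin d → ℝ) → ℝ) 2 volume)
  set p : ℝ := (h - 1) / (d:ℝ) - 1/2 with hp_def
  have hd0 : (0:ℝ) < d := by exact_mod_cast Nat.lt_of_lt_of_le Nat.zero_lt_one hd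
  have hd1 : (1:ℝ) ≤ d := by exact_mod_cast hd
  have hh1 : (1/2:ℝ) < h := hh.1
  have hh2 : h < 1 := hh.2
  have hp : p ∈ Set.Ioo (-1 : ℝ) (-(1/2)) := by
    constructor
    · have h1 : h - 1 ≤ (h - 1) / d := by
        rw [le_div_iff₀ hd0]; nlinarith
      rw [hp_def]; nlinarith
    · have h2 : (h - 1) / d < 0 := div_neg_of_neg_of_pos (by linarith) hd0
      rw [hp_def]; linarith
  set β : ℝ := (2*p + 1) * d with hβ_def
  have hβeq : β = 2*(h-1) := by
    rw [hβ_def, hp_def]; field_simp; ring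
  have hβ1 : -1 < β := by rw [hβeq]; nlinarith
  have hβ0 : β ≤ 0 := by rw [hβeq]; nlinarith
  have hgm : Measurable fun q : (Fin d → ℝ) × ℝ => ∏ ℓ, phi p (q.2 - q.1 ℓ) :=
    Finset.measurable_prod _ fun ℓ _ => (measurable_phi p).comp
      (measurable_snd.sub ((measurable_pi_apply ℓ).comp measurable_fst))
  have key_meas : ∀ x : Fin d → ℝ, Measurable fun s : ℝ => ∏ ℓ, phi p (s - x ℓ) := by
    intro x
    exact Finset.measurable_prod _ fun ℓ _ => (measurable_phi p).comp
      (measurable_id.sub measurable_const)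
  have hFeq : (fun x : Fin d → ℝ =>
      ∫ s in Set.Ioc (0:ℝ) t, ∏ ℓ, (max (s - x ℓ) 0) ^ p)
      = fun x : Fin d → ℝ => ∫ s in Set.Ioc (0:ℝ) t, ∏ ℓ, phi p (s - x ℓ) := rfl
  rw [hFeq]
  constructor
  · exact (hgm.stronglyMeasurable.integral_prod_right').aestronglyMeasurable
  set ν : Measure ℝ := volume.restrict (Set.Ioc (0:ℝ) t) with hν_def
  set L : (Fin d → ℝ) → ENNReal := fun x => ∫⁻ s, ENNReal.ofReal (∏ ℓ, phi p (s - x ℓ)) ∂ν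
    with hL_def
  have g_nonneg : ∀ (s : ℝ) (x : Fin d → ℝ), 0 ≤ ∏ ℓ, phi p (s - x ℓ) :=
    fun s x => Finset.prod_nonneg fun ℓ _ => phi_nonneg _ _
  have hpt : ∀ x : Fin d → ℝ,
      (‖∫ s, ∏ ℓ, phi p (s - x ℓ) ∂ν‖₊ : ENNReal) ^ (2:ℝ) ≤ L x * L x := by
    intro x
    have hF0 : 0 ≤ ∫ s, ∏ ℓ, phi p (s - x ℓ) ∂ν :=
      integral_nonneg fun s => g_nonneg s x
    have hFle : ENNReal.ofReal (∫ s, ∏ ℓ, phi p (s - x ℓ) ∂ν) ≤ L x := by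
      rw [integral_eq_lintegral_of_nonneg_ae (Filter.Eventually.of_forall fun s => g_nonneg s x)
        (key_meas x).aestronglyMeasurable]
      exact ENNReal.ofReal_toReal_le
    calc (‖∫ s, ∏ ℓ, phi p (s - x ℓ) ∂ν‖₊ : ENNReal) ^ (2:ℝ)
        = ENNReal.ofReal (∫ s, ∏ ℓ, phi p (s - x ℓ) ∂ν) ^ (2:ℝ) := by
          rw [← Real.enorm_eq_ofReal hF0]; rfl
      _ ≤ (L x) ^ (2:ℝ) := ENNReal.rpow_le_rpow hFle (by norm_num)
      _ = L x * L x := by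
          rw [show (2:ℝ) = ((2:ℕ):ℝ) by norm_num, ENNReal.rpow_natCast, sq]
  set M0 : ENNReal := ∫⁻ u in Set.Icc (0:ℝ) t, ENNReal.ofReal (|u| ^ β) with hM0_def
  have hM0_lt : M0 < ⊤ := by
    have hint : IntegrableOn (fun u : ℝ => |u| ^ β) (Set.Icc (0:ℝ) t) := by
      have h1 : IntegrableOn (fun u : ℝ => u ^ β) (Set.Icc (0:ℝ) t) := by
        rw [integrableOn_Icc_iff_integrableOn_Ioo]
        exact (intervalIntegral.integrableOn_Ioo_rpow_iff ht0).2 hβ1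
      exact h1.congr_fun (fun u hu => by rw [abs_of_nonneg hu.1]) measurableSet_Icc
    exact hint.lintegral_lt_top
  have hJ : ∀ s ∈ Set.Ioc (0:ℝ) t,
      (∫⁻ s', ENNReal.ofReal (|s' - s| ^ β) ∂ν) ≤ 2 * M0 := by
    intro s hs
    have hsplit : Set.Ioc (0:ℝ) t = Set.Ioc (0:ℝ) s ∪ Set.Ioc s t :=
      (Set.Ioc_union_Ioc_eq_Ioc hs.1.le hs.2).symm
    rw [hν_def, hsplit, lintegral_union measurableSet_Ioc (Set.Ioc_disjoint_Ioc_of_le le_rfl)]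
    have hpart1 : (∫⁻ s' in Set.Ioc (0:ℝ) s, ENNReal.ofReal (|s' - s| ^ β)) ≤ M0 := by
      have mp1 : MeasurePreserving (fun x : ℝ => s - x) volume volume := by
        have := (measurePreserving_add_left (volume : Measure ℝ) s).comp
          (Measure.measurePreserving_neg (volume : Measure ℝ))
        simpa [Function.comp_def, sub_eq_add_neg] using this
      have hemb : MeasurableEmbedding (fun x : ℝ => s - x) :=
        (MeasurableEquiv.subLeft s).measurableEmbedding
      have h3 : (∫⁻ s' in Set.Ioc (0:ℝ) s, ENNReal.ofReal (|s - s'| ^ β))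
          = ∫⁻ u in (fun x : ℝ => s - x) '' Set.Ioc (0:ℝ) s, ENNReal.ofReal (|u| ^ β) :=
        mp1.setLIntegral_comp_emb hemb (fun u => ENNReal.ofReal (|u| ^ β)) (Set.Ioc 0 s)
      simp only [abs_sub_comm _ s]
      rw [h3, Set.image_const_sub_Ioc, sub_self, sub_zero]
      exact lintegral_mono_set (Set.Ico_subset_Icc_self.trans
        (Set.Icc_subset_Icc le_rfl hs.2))
    have hpart2 : (∫⁻ s' in Set.Ioc s t, ENNReal.ofReal (|s' - s| ^ β)) ≤ M0 := by
      have mp2 : MeasurePreserving (fun x : ℝ => x - s) volume volume := by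
        have := measurePreserving_add_right (volume : Measure ℝ) (-s)
        simpa [sub_eq_add_neg] using this
      have hemb : MeasurableEmbedding (fun x : ℝ => x - s) :=
        (MeasurableEquiv.subRight s).measurableEmbedding
      have h3 : (∫⁻ s' in Set.Ioc s t, ENNReal.ofReal (|s' - s| ^ β))
          = ∫⁻ u in (fun x : ℝ => x - s) '' Set.Ioc s t, ENNReal.ofReal (|u| ^ β) :=
        mp2.setLIntegral_comp_emb hemb (fun u => ENNReal.ofReal (|u| ^ β)) (Set.Ioc s t)
      rw [h3, Set.image_sub_const_Ioc, sub_self]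
      exact lintegral_mono_set ((Set.Ioc_subset_Icc_self).trans
        (Set.Icc_subset_Icc le_rfl (by linarith [hs.1])))
    calc _ ≤ M0 + M0 := add_le_add hpart1 hpart2
      _ = 2 * M0 := (two_mul M0).symm
  have hinner : ∀ s s' : ℝ, s ≠ s' →
      (∫⁻ x : Fin d → ℝ, ENNReal.ofReal (∏ ℓ, phi p (s - x ℓ))
        * ENNReal.ofReal (∏ ℓ, phi p (s' - x ℓ)))
      = ENNReal.ofReal (|s' - s| ^ β) * Cst p ^ d := by
    intro s s' hne
    have hprod : ∀ x : Fin d → ℝ,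
        ENNReal.ofReal (∏ ℓ, phi p (s - x ℓ)) * ENNReal.ofReal (∏ ℓ, phi p (s' - x ℓ))
        = ∏ ℓ, (fun y : ℝ => ENNReal.ofReal (phi p (s - y) * phi p (s' - y))) (x ℓ) := by
      intro x
      rw [ENNReal.ofReal_prod_of_nonneg (fun ℓ _ => phi_nonneg _ _),
        ENNReal.ofReal_prod_of_nonneg (fun ℓ _ => phi_nonneg _ _),
        ← Finset.prod_mul_distrib]
      exact Finset.prod_congr rfl fun ℓ _ => (ENNReal.ofReal_mul (phi_nonneg _ _)).symm
    simp_rw [hprod]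
    have hfK : Measurable fun y : ℝ => ENNReal.ofReal (phi p (s - y) * phi p (s' - y)) :=
      (((measurable_phi p).comp (measurable_const.sub measurable_id)).mul
        ((measurable_phi p).comp (measurable_const.sub measurable_id))).ennreal_ofReal
    rw [lintegral_fin_prod_pow d (fun y : ℝ => ENNReal.ofReal (phi p (s - y) * phi p (s' - y))) hfK]
    rw [K_eq hp hne, mul_pow, ← ENNReal.ofReal_pow (Real.rpow_nonneg (abs_nonneg _) _)]
    congr 2
    rw [← Real.rpow_natCast (|s' - s| ^ (2*p+1)) d, ← Real.rpow_mul (abs_nonneg _)]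
  -- final computation
  rw [eLpNorm_eq_lintegral_rpow_enorm_toReal (by norm_num : (2:ENNReal) ≠ 0)
    (by norm_num : (2:ENNReal) ≠ ⊤)]
  have h2t : (2:ENNReal).toReal = (2:ℝ) := by norm_num
  rw [h2t]
  refine ENNReal.rpow_lt_top_of_nonneg (by norm_num) ?_
  -- measurability of the full integrand
  have hH : Measurable fun q : ((Fin d → ℝ) × ℝ) × ℝ =>
      ENNReal.ofReal (∏ ℓ, phi p (q.1.2 - q.1.1 ℓ))
        * ENNReal.ofReal (∏ ℓ, phi p (q.2 - q.1.1 ℓ)) :=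
    ((Finset.measurable_prod _ fun ℓ _ => (measurable_phi p).comp
        ((measurable_fst.snd).sub ((measurable_pi_apply ℓ).comp
          measurable_fst.fst))).ennreal_ofReal).mul
      ((Finset.measurable_prod _ fun ℓ _ => (measurable_phi p).comp
        (measurable_snd.sub ((measurable_pi_apply ℓ).comp
          measurable_fst.fst))).ennreal_ofReal)
  have step_eq : ∀ x : Fin d → ℝ, L x * L x
      = ∫⁻ s, (∫⁻ s', ENNReal.ofReal (∏ ℓ, phi p (s - x ℓ))
          * ENNReal.ofReal (∏ ℓ, phi p (s' - x ℓ)) ∂ν) ∂ν := by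
    intro x
    have hmx : Measurable fun s : ℝ => ENNReal.ofReal (∏ ℓ, phi p (s - x ℓ)) :=
      (key_meas x).ennreal_ofReal
    have e1 : L x * L x = ∫⁻ s, ENNReal.ofReal (∏ ℓ, phi p (s - x ℓ)) * L x ∂ν :=
      (lintegral_mul_const (L x) hmx).symm
    rw [e1]
    exact lintegral_congr fun s => (lintegral_const_mul _ hmx).symm
  have swap1 : (∫⁻ x : Fin d → ℝ, ∫⁻ s, (∫⁻ s', ENNReal.ofReal (∏ ℓ, phi p (s - x ℓ))
        * ENNReal.ofReal (∏ ℓ, phi p (s' - x ℓ)) ∂ν) ∂ν)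
      = ∫⁻ s, (∫⁻ x : Fin d → ℝ, ∫⁻ s', ENNReal.ofReal (∏ ℓ, phi p (s - x ℓ))
        * ENNReal.ofReal (∏ ℓ, phi p (s' - x ℓ)) ∂ν) ∂ν := by
    exact lintegral_lintegral_swap (hH.lintegral_prod_right').aemeasurable
  have swap2 : ∀ s : ℝ, (∫⁻ x : Fin d → ℝ, ∫⁻ s', ENNReal.ofReal (∏ ℓ, phi p (s - x ℓ))
        * ENNReal.ofReal (∏ ℓ, phi p (s' - x ℓ)) ∂ν)
      = ∫⁻ s', (∫⁻ x : Fin d → ℝ, ENNReal.ofReal (∏ ℓ, phi p (s - x ℓ))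
        * ENNReal.ofReal (∏ ℓ, phi p (s' - x ℓ))) ∂ν := by
    intro s
    have hm : Measurable fun q : (Fin d → ℝ) × ℝ =>
        ENNReal.ofReal (∏ ℓ, phi p (s - q.1 ℓ)) * ENNReal.ofReal (∏ ℓ, phi p (q.2 - q.1 ℓ)) :=
      ((Finset.measurable_prod _ fun ℓ _ => (measurable_phi p).comp
          (measurable_const.sub ((measurable_pi_apply ℓ).comp
            measurable_fst))).ennreal_ofReal).mul
        ((Finset.measurable_prod _ fun ℓ _ => (measurable_phi p).comp
          (measurable_snd.sub ((measurable_pi_apply ℓ).comp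
            measurable_fst))).ennreal_ofReal)
    exact lintegral_lintegral_swap hm.aemeasurable
  have inner_bound : ∀ s ∈ Set.Ioc (0:ℝ) t,
      (∫⁻ s', (∫⁻ x : Fin d → ℝ, ENNReal.ofReal (∏ ℓ, phi p (s - x ℓ))
        * ENNReal.ofReal (∏ ℓ, phi p (s' - x ℓ))) ∂ν) ≤ Cst p ^ d * (2 * M0) := by
    intro s hs
    have hane : ∀ᵐ s' ∂ν, s' ≠ s := by
      have hns : ν {s} = 0 := by
        rw [hν_def, Measure.restrict_apply (measurableSet_singleton s)]
        exact measure_mono_null Set.inter_subset_left Real.volume_singleton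
      rw [Filter.eventually_iff, mem_ae_iff]
      convert hns using 2
      ext a
      simp
    have hae : ∀ᵐ s' ∂ν, (∫⁻ x : Fin d → ℝ, ENNReal.ofReal (∏ ℓ, phi p (s - x ℓ))
        * ENNReal.ofReal (∏ ℓ, phi p (s' - x ℓ)))
        = ENNReal.ofReal (|s' - s| ^ β) * Cst p ^ d := by
      filter_upwards [hane] with s' hne'
      exact hinner s s' (Ne.symm hne')
    rw [lintegral_congr_ae hae]
    have hmb : Measurable fun s' : ℝ => ENNReal.ofReal (|s' - s| ^ β) :=
      (((measurable_id.sub measurable_const).abs).pow measurable_const).ennreal_ofReal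
    rw [lintegral_mul_const _ hmb]
    calc (∫⁻ s', ENNReal.ofReal (|s' - s| ^ β) ∂ν) * Cst p ^ d
        ≤ (2 * M0) * Cst p ^ d := mul_le_mul_left (hJ s hs) _
      _ = Cst p ^ d * (2 * M0) := mul_comm _ _
  have main : (∫⁻ x : Fin d → ℝ, (‖∫ s, ∏ ℓ, phi p (s - x ℓ) ∂ν‖₊ : ENNReal) ^ (2:ℝ))
      < ⊤ := by
    calc (∫⁻ x : Fin d → ℝ, (‖∫ s, ∏ ℓ, phi p (s - x ℓ) ∂ν‖₊ : ENNReal) ^ (2:ℝ))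
        ≤ ∫⁻ x : Fin d → ℝ, L x * L x := lintegral_mono hpt
      _ = ∫⁻ x : Fin d → ℝ, ∫⁻ s, (∫⁻ s', ENNReal.ofReal (∏ ℓ, phi p (s - x ℓ))
            * ENNReal.ofReal (∏ ℓ, phi p (s' - x ℓ)) ∂ν) ∂ν := lintegral_congr step_eq
      _ = ∫⁻ s, (∫⁻ x : Fin d → ℝ, ∫⁻ s', ENNReal.ofReal (∏ ℓ, phi p (s - x ℓ))
            * ENNReal.ofReal (∏ ℓ, phi p (s' - x ℓ)) ∂ν) ∂ν := swap1
      _ = ∫⁻ s, (∫⁻ s', (∫⁻ x : Fin d → ℝ, ENNReal.ofReal (∏ ℓ, phi p (s - x ℓ))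
            * ENNReal.ofReal (∏ ℓ, phi p (s' - x ℓ))) ∂ν) ∂ν :=
          lintegral_congr fun s => swap2 s
      _ ≤ ∫⁻ _ in Set.Ioc (0:ℝ) t, Cst p ^ d * (2 * M0) :=
          setLIntegral_mono' measurableSet_Ioc inner_bound
      _ = Cst p ^ d * (2 * M0) * volume (Set.Ioc (0:ℝ) t) := setLIntegral_const _ _
      _ < ⊤ := by
          refine ENNReal.mul_lt_top ?_ ?_
          · exact ENNReal.mul_lt_top (ENNReal.pow_lt_top (Cst_lt_top hp))
              (ENNReal.mul_lt_top (by norm_num) hM0_lt)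
          · rw [Real.volume_Ioc]
            exact ENNReal.ofReal_lt_top
  exact main.ne
end

section
/- Let d ≥ 1, 1/2 < a < b < 1 and ε > 0 be such that 1/2 < a - ε < b + ε < 1. Then there exists a constant c_ε > 0 such that for all h₁, h₂ with a ≤ h₁ ≤ h₂ ≤ b, all u ≥ 0 and all x ∈ ℝ^d, |∫_0^u (f_{h₁}(s,x) - f_{h₂}(s,x)) ds| ≤ c_ε |h₁ - h₂| ∫_0^u (f_{a-ε}(s,x) + f_{b+ε}(s,x)) ds. -/
open MeasureTheory

/-- The Hermite kernel `f_h(s,x) = ∏_ℓ (s-x_ℓ)_+^{(h-1)/d - 1/2}`. -/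
noncomputable def hermiteKernel (d : ℕ) (h : ℝ) (s : ℝ) (x : Fin d → ℝ) : ℝ :=
  ∏ ℓ, (max (s - x ℓ) 0) ^ ((h - 1) / d - 1/2)

section Aux

open Real Set Finset

/-- The same kernel with a direct exponent parameter. -/
noncomputable def Kker (d : ℕ) (p : ℝ) (s : ℝ) (x : Fin d → ℝ) : ℝ :=
  ∏ ℓ, (max (s - x ℓ) 0) ^ p

lemma hermiteKernel_eq_Kker (d : ℕ) (h s : ℝ) (x : Fin d → ℝ) :
    hermiteKernel d h s x = Kker d ((h - 1) / d - 1/2) s x := rfl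

variable {d : ℕ} {x : Fin d → ℝ}

lemma Kker_nonneg (p s : ℝ) : 0 ≤ Kker d p s x :=
  Finset.prod_nonneg fun _ _ => Real.rpow_nonneg (le_max_right _ _) _

lemma Kker_measurable (p : ℝ) : Measurable (fun s => Kker d p s x) := by
  unfold Kker
  exact Finset.measurable_prod _ fun ℓ _ => by fun_prop

lemma Kker_eq_zero {p : ℝ} (hp : p ≠ 0) {s : ℝ} (hs : ∃ ℓ, s ≤ x ℓ) : Kker d p s x = 0 := by
  obtain ⟨ℓ, hℓ⟩ := hs
  exact Finset.prod_eq_zero (Finset.mem_univ ℓ)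
    (by rw [max_eq_right (sub_nonpos.mpr hℓ), Real.zero_rpow hp])

lemma Kker_eq_exp {p s : ℝ} (hs : ∀ ℓ, x ℓ < s) :
    Kker d p s x = Real.exp (p * ∑ ℓ, Real.log (s - x ℓ)) := by
  rw [Finset.mul_sum, Real.exp_sum]
  exact Finset.prod_congr rfl fun ℓ _ => by
    rw [max_eq_left (sub_nonneg.mpr (hs ℓ).le), Real.rpow_def_of_pos (sub_pos.mpr (hs ℓ)),
      mul_comm]

private lemma exp_sub_exp_le {a b : ℝ} (hab : a ≤ b) :
    Real.exp b - Real.exp a ≤ (b - a) * Real.exp b := by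
  have h1 := Real.add_one_le_exp (a - b)
  have h2 : Real.exp a = Real.exp (a - b) * Real.exp b := by rw [← Real.exp_add]; ring_nf
  nlinarith [Real.exp_pos b]

/-- The key mean-value-type pointwise bound. -/
lemma Kker_abs_sub_le {p0 p1 p2 q γ : ℝ} (hγ : 0 < γ) (h0 : p0 + γ ≤ p1)
    (h12 : p1 ≤ p2) (h2q : p2 + γ ≤ q) (hq : q < 0) (s : ℝ) :
    |Kker d p1 s x - Kker d p2 s x| ≤ ((p2 - p1) / γ) * (Kker d p0 s x + Kker d q s x) := by
  have hp2 : p2 < 0 := by linarith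
  have hp1 : p1 < 0 := by linarith
  have hp0 : p0 < 0 := by linarith
  have h21 : (0:ℝ) ≤ p2 - p1 := by linarith
  by_cases hz : ∃ ℓ, s ≤ x ℓ
  · rw [Kker_eq_zero hp1.ne hz, Kker_eq_zero hp2.ne hz, Kker_eq_zero hp0.ne hz,
      Kker_eq_zero hq.ne hz]
    simp
  push_neg at hz
  rw [Kker_eq_exp hz, Kker_eq_exp hz, Kker_eq_exp hz, Kker_eq_exp hz]
  set L := ∑ ℓ, Real.log (s - x ℓ) with hL
  rcases le_total 0 L with hL0 | hL0
  · have hmax : p1 * L ≤ p2 * L := by nlinarith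
    have key : γ * L * Real.exp (p2 * L) ≤ Real.exp (q * L) := by
      have hb : γ * L ≤ Real.exp ((q - p2) * L) := by
        nlinarith [Real.add_one_le_exp ((q - p2) * L)]
      calc γ * L * Real.exp (p2 * L) ≤ Real.exp ((q - p2) * L) * Real.exp (p2 * L) :=
            mul_le_mul_of_nonneg_right hb (Real.exp_pos _).le
        _ = Real.exp (q * L) := by rw [← Real.exp_add]; ring_nf
    have step : L * Real.exp (p2 * L) ≤ (1 / γ) * Real.exp (q * L) := by
      have h' : L * Real.exp (p2 * L) = (1 / γ) * (γ * L * Real.exp (p2 * L)) := by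
        field_simp
      rw [h']
      exact mul_le_mul_of_nonneg_left key (by positivity)
    calc |Real.exp (p1 * L) - Real.exp (p2 * L)|
        = Real.exp (p2 * L) - Real.exp (p1 * L) := by
          rw [abs_sub_comm, abs_of_nonneg (sub_nonneg.mpr (Real.exp_le_exp.mpr hmax))]
      _ ≤ (p2 * L - p1 * L) * Real.exp (p2 * L) := exp_sub_exp_le hmax
      _ = (p2 - p1) * (L * Real.exp (p2 * L)) := by ring
      _ ≤ (p2 - p1) * ((1 / γ) * Real.exp (q * L)) := mul_le_mul_of_nonneg_left step h21
      _ = ((p2 - p1) / γ) * Real.exp (q * L) := by ring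
      _ ≤ ((p2 - p1) / γ) * (Real.exp (p0 * L) + Real.exp (q * L)) := by
          have := Real.exp_pos (p0 * L)
          have hnn : (0:ℝ) ≤ (p2 - p1) / γ := by positivity
          nlinarith
  · have hmax : p2 * L ≤ p1 * L := by nlinarith
    have key : γ * (-L) * Real.exp (p1 * L) ≤ Real.exp (p0 * L) := by
      have hb : γ * (-L) ≤ Real.exp ((p0 - p1) * L) := by
        nlinarith [Real.add_one_le_exp ((p0 - p1) * L)]
      calc γ * (-L) * Real.exp (p1 * L) ≤ Real.exp ((p0 - p1) * L) * Real.exp (p1 * L) :=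
            mul_le_mul_of_nonneg_right hb (Real.exp_pos _).le
        _ = Real.exp (p0 * L) := by rw [← Real.exp_add]; ring_nf
    have step : (-L) * Real.exp (p1 * L) ≤ (1 / γ) * Real.exp (p0 * L) := by
      have h' : (-L) * Real.exp (p1 * L) = (1 / γ) * (γ * (-L) * Real.exp (p1 * L)) := by
        field_simp
      rw [h']
      exact mul_le_mul_of_nonneg_left key (by positivity)
    calc |Real.exp (p1 * L) - Real.exp (p2 * L)|
        = Real.exp (p1 * L) - Real.exp (p2 * L) := by
          rw [abs_of_nonneg (sub_nonneg.mpr (Real.exp_le_exp.mpr hmax))]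
      _ ≤ (p1 * L - p2 * L) * Real.exp (p1 * L) := by
          have := exp_sub_exp_le hmax; linarith
      _ = (p2 - p1) * ((-L) * Real.exp (p1 * L)) := by ring
      _ ≤ (p2 - p1) * ((1 / γ) * Real.exp (p0 * L)) := mul_le_mul_of_nonneg_left step h21
      _ = ((p2 - p1) / γ) * Real.exp (p0 * L) := by ring
      _ ≤ ((p2 - p1) / γ) * (Real.exp (p0 * L) + Real.exp (q * L)) := by
          have := Real.exp_pos (q * L)
          have hnn : (0:ℝ) ≤ (p2 - p1) / γ := by positivity
          nlinarith

/-- Domination: `K_p ≤ K_{p0} + 1` for `p0 ≤ p < 0`. -/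
lemma Kker_le_add_one {p0 p : ℝ} (h0 : p0 ≤ p) (hp : p < 0) (hp0 : p0 < 0) (s : ℝ) :
    Kker d p s x ≤ Kker d p0 s x + 1 := by
  by_cases hz : ∃ ℓ, s ≤ x ℓ
  · rw [Kker_eq_zero hp.ne hz, Kker_eq_zero hp0.ne hz]; norm_num
  push_neg at hz
  rw [Kker_eq_exp hz, Kker_eq_exp hz]
  set L := ∑ ℓ, Real.log (s - x ℓ)
  rcases le_total 0 L with hL | hL
  · have h1 : Real.exp (p * L) ≤ 1 := Real.exp_le_one_iff.mpr (by nlinarith)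
    nlinarith [Real.exp_pos (p0 * L)]
  · have h1 : Real.exp (p * L) ≤ Real.exp (p0 * L) := Real.exp_le_exp.mpr (by nlinarith)
    linarith

/-- Lower bound for the difference: away from the `L > -T` region the difference
dominates half of `K_{p1}`. -/
lemma Kker_le_two_abs_diff {p1 p2 : ℝ} (h12 : p1 < p2) (hp2 : p2 < 0) (s : ℝ) :
    Kker d p1 s x ≤ 2 * |Kker d p1 s x - Kker d p2 s x|
      + Real.exp (-p1 * (Real.log 2 / (p2 - p1))) := by
  have hp1 : p1 < 0 := h12.trans hp2
  by_cases hz : ∃ ℓ, s ≤ x ℓ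
  · rw [Kker_eq_zero hp1.ne hz]; positivity
  push_neg at hz
  rw [Kker_eq_exp hz, Kker_eq_exp hz]
  set L := ∑ ℓ, Real.log (s - x ℓ)
  set T := Real.log 2 / (p2 - p1) with hT
  have hTpos : 0 < T := div_pos (Real.log_pos one_lt_two) (by linarith)
  rcases le_or_gt L (-T) with hLT | hLT
  · have hTexp : (p2 - p1) * T = Real.log 2 := by
      have hne : p2 - p1 ≠ 0 := sub_ne_zero.mpr (ne_of_gt h12)
      rw [hT, mul_div_assoc']
      exact mul_div_cancel_left₀ _ hne
    have h2 : Real.exp ((p2 - p1) * L) ≤ 1/2 := by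
      have hle : (p2 - p1) * L ≤ -Real.log 2 := by nlinarith [sub_pos.mpr h12]
      calc Real.exp ((p2 - p1) * L) ≤ Real.exp (-Real.log 2) := Real.exp_le_exp.mpr hle
        _ = 1/2 := by
            rw [Real.exp_neg, Real.exp_log (by norm_num : (0:ℝ) < 2)]; norm_num
    have hsplit : Real.exp (p2 * L) = Real.exp ((p2 - p1) * L) * Real.exp (p1 * L) := by
      rw [← Real.exp_add]; ring_nf
    have hdiff : Real.exp (p1 * L) / 2 ≤ Real.exp (p1 * L) - Real.exp (p2 * L) := by
      nlinarith [Real.exp_pos (p1 * L)]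
    have habs : Real.exp (p1 * L) / 2 ≤ |Real.exp (p1 * L) - Real.exp (p2 * L)| :=
      hdiff.trans (le_abs_self _)
    nlinarith [Real.exp_pos (-p1 * T)]
  · have hle : p1 * L ≤ -p1 * T := by nlinarith
    have := Real.exp_le_exp.mpr hle
    nlinarith [abs_nonneg (Real.exp (p1 * L) - Real.exp (p2 * L))]

end Aux

section Integrability

open Real Set Finset

variable {d : ℕ} {x : Fin d → ℝ}

/-- Integrability of a shifted power on `Ioc v u`. -/
lemma integrableOn_rpow_shift_iff {r v u : ℝ} (hvu : v < u) :
    IntegrableOn (fun s => (s - v) ^ r) (Set.Ioc v u) volume ↔ -1 < r := by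
  have key := (measurePreserving_add_right volume v).integrableOn_comp_preimage
    (measurableEmbedding_addRight v) (f := fun s : ℝ => (s - v) ^ r) (s := Set.Ioc v u)
  have hcomp : ((fun s : ℝ => (s - v) ^ r) ∘ fun t => t + v) = fun t : ℝ => t ^ r := by
    funext t; simp
  rw [hcomp, Set.preimage_add_const_Ioc, sub_self] at key
  rw [← key, integrableOn_Ioc_iff_integrableOn_Ioo]
  exact intervalIntegral.integrableOn_Ioo_rpow_iff (by linarith : (0:ℝ) < u - v)

/-- Factorization of the kernel above the top singularity. -/
lemma Kker_factor [DecidableEq ℝ] {p s s₀ : ℝ} (hub : ∀ ℓ, x ℓ ≤ s₀) (hs : s₀ < s) :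
    Kker d p s x =
      (s - s₀) ^ (p * ((Finset.univ.filter (fun ℓ => x ℓ = s₀)).card : ℝ)) *
      ∏ ℓ ∈ Finset.univ.filter (fun ℓ => ¬ x ℓ = s₀), (s - x ℓ) ^ p := by
  rw [Kker, ← Finset.prod_filter_mul_prod_filter_not Finset.univ (fun ℓ => x ℓ = s₀)]
  congr 1
  · rw [Finset.prod_congr rfl (fun ℓ hℓ => ?_), Finset.prod_const]
    · rw [Real.rpow_mul (sub_nonneg.mpr hs.le), Real.rpow_natCast]
    · rw [(Finset.mem_filter.mp hℓ).2, max_eq_left (by linarith)]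
  · exact Finset.prod_congr rfl fun ℓ hℓ => by
      rw [max_eq_left (sub_nonneg.mpr ((hub ℓ).trans hs.le))]

/-- The decisive integrability transfer between two exponents in `(-1, -1/2)`. -/
lemma Kker_transfer (hd : 0 < d) (x : Fin d → ℝ) (u : ℝ) {p0 p1 : ℝ}
    (h0a : -1 < p0) (h0b : p0 < 0) (h1a : -1 < p1) (h1b : p1 ≤ -(1/2))
    (H : IntegrableOn (fun s => Kker d p1 s x) (Set.Ioc 0 u) volume) :
    IntegrableOn (fun s => Kker d p0 s x) (Set.Ioc 0 u) volume := by
  classical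
  have hne : (Finset.univ : Finset (Fin d)).Nonempty := ⟨⟨0, hd⟩, Finset.mem_univ _⟩
  set s₀ := Finset.univ.sup' hne x with hs₀def
  have hub : ∀ ℓ, x ℓ ≤ s₀ := fun ℓ => Finset.le_sup' x (Finset.mem_univ ℓ)
  obtain ⟨ℓ₀, -, hℓ₀⟩ := Finset.exists_mem_eq_sup' hne x
  set k : ℕ := (Finset.univ.filter (fun ℓ => x ℓ = s₀)).card with hkdef
  have hk1 : 1 ≤ k := Finset.card_pos.mpr
    ⟨ℓ₀, Finset.mem_filter.mpr ⟨Finset.mem_univ _, hℓ₀.symm⟩⟩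
  have hzero : ∀ s ≤ s₀, Kker d p0 s x = 0 := fun s hs =>
    Kker_eq_zero h0b.ne ⟨ℓ₀, by rw [← hℓ₀]; exact hs⟩
  rcases le_or_gt u s₀ with hus | hsu
  · have heq : Set.EqOn (fun s => Kker d p0 s x) (fun _ => (0:ℝ)) (Set.Ioc 0 u) :=
      fun s hs => hzero s (hs.2.trans hus)
    rw [integrableOn_congr_fun heq measurableSet_Ioc]
    exact integrableOn_zero
  rcases lt_or_ge s₀ 0 with hneg | hpos
  · -- the singularity is strictly left of the interval: the kernel is bounded there
    set C : ℝ := ∏ ℓ ∈ Finset.univ.filter (fun ℓ => ¬ x ℓ = s₀), (s₀ - x ℓ) ^ p0 with hCdef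
    have hC : 0 ≤ C := Finset.prod_nonneg fun ℓ hℓ =>
      Real.rpow_nonneg (by
        have := hub ℓ
        have h2 := (Finset.mem_filter.mp hℓ).2
        have : x ℓ < s₀ := lt_of_le_of_ne (hub ℓ) h2
        linarith) _
    have hbd : ∀ s ∈ Set.Ioc (0:ℝ) u, Kker d p0 s x ≤ (-s₀) ^ (p0 * (k:ℝ)) * C := by
      intro s hs
      obtain ⟨hs1, hs2⟩ := hs
      have hss : s₀ < s := hneg.trans hs1
      rw [Kker_factor hub hss]
      have hexp : (0:ℝ) ≤ (s - s₀) ^ (p0 * (k:ℝ)) := Real.rpow_nonneg (by linarith) _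
      have h1 : (s - s₀) ^ (p0 * (k:ℝ)) ≤ (-s₀) ^ (p0 * (k:ℝ)) := by
        apply Real.rpow_le_rpow_of_nonpos (by linarith) (by linarith)
        have : (0:ℝ) < (k:ℝ) := by exact_mod_cast hk1
        nlinarith
      have h2 : (∏ ℓ ∈ Finset.univ.filter (fun ℓ => ¬ x ℓ = s₀), (s - x ℓ) ^ p0) ≤ C := by
        rw [hCdef]
        apply Finset.prod_le_prod
        · intro ℓ _; exact Real.rpow_nonneg (by
            have := hub ℓ; linarith) _
        · intro ℓ hℓ
          have hlt : x ℓ < s₀ := lt_of_le_of_ne (hub ℓ) (Finset.mem_filter.mp hℓ).2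
          exact Real.rpow_le_rpow_of_nonpos (by linarith) (by linarith) h0b.le
      calc (s - s₀) ^ (p0 * (k:ℝ)) * ∏ ℓ ∈ Finset.univ.filter (fun ℓ => ¬ x ℓ = s₀),
            (s - x ℓ) ^ p0
          ≤ (s - s₀) ^ (p0 * (k:ℝ)) * C := by
            apply mul_le_mul_of_nonneg_left h2 hexp
        _ ≤ (-s₀) ^ (p0 * (k:ℝ)) * C := mul_le_mul_of_nonneg_right h1 hC
    apply Integrable.mono' (g := fun _ => (-s₀) ^ (p0 * (k:ℝ)) * C)
      (integrableOn_const measure_Ioc_lt_top.ne)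
      (Kker_measurable p0).aestronglyMeasurable
    rw [ae_restrict_iff' measurableSet_Ioc]
    exact Filter.Eventually.of_forall fun s hs => by
      rw [Real.norm_eq_abs, abs_of_nonneg (Kker_nonneg _ _)]; exact hbd s hs
  · -- `0 ≤ s₀ < u`: genuine singularity inside the closure of the interval
    -- First: the multiplicity `k` must be `1`.
    have hkone : k = 1 := by
      by_contra hk2'
      have hk2 : 2 ≤ k := by omega
      set c₀ : ℝ := ∏ ℓ ∈ Finset.univ.filter (fun ℓ => ¬ x ℓ = s₀), (u - x ℓ) ^ p1 with hc₀def
      have hc₀ : 0 < c₀ := Finset.prod_pos fun ℓ hℓ => Real.rpow_pos_of_pos (by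
        have hlt : x ℓ < s₀ := lt_of_le_of_ne (hub ℓ) (Finset.mem_filter.mp hℓ).2
        linarith) _
      have Hsub : IntegrableOn (fun s => Kker d p1 s x) (Set.Ioc s₀ u) volume :=
        H.mono_set (Set.Ioc_subset_Ioc_left hpos)
      have hlow : ∀ s ∈ Set.Ioc s₀ u, c₀ * (s - s₀) ^ (p1 * (k:ℝ)) ≤ Kker d p1 s x := by
        intro s hs
        rw [Kker_factor hub hs.1]
        rw [mul_comm]
        apply mul_le_mul_of_nonneg_left _ (Real.rpow_nonneg (by linarith [hs.1]) _)
        rw [hc₀def]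
        apply Finset.prod_le_prod
        · intro ℓ hℓ
          have hlt : x ℓ < s₀ := lt_of_le_of_ne (hub ℓ) (Finset.mem_filter.mp hℓ).2
          exact Real.rpow_nonneg (by linarith [hs.2]) _
        · intro ℓ hℓ
          have hlt : x ℓ < s₀ := lt_of_le_of_ne (hub ℓ) (Finset.mem_filter.mp hℓ).2
          exact Real.rpow_le_rpow_of_nonpos (by linarith [hs.1]) (by linarith [hs.2]) (by linarith)
      have hrint : IntegrableOn (fun s => (s - s₀) ^ (p1 * (k:ℝ))) (Set.Ioc s₀ u) volume := by
        apply Integrable.mono' (Hsub.const_mul c₀⁻¹)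
          (by fun_prop : Measurable fun s : ℝ => (s - s₀) ^ (p1 * (k:ℝ))).aestronglyMeasurable
        rw [ae_restrict_iff' measurableSet_Ioc]
        refine Filter.Eventually.of_forall fun s hs => ?_
        rw [Real.norm_eq_abs, abs_of_nonneg (Real.rpow_nonneg (by linarith [hs.1]) _)]
        calc (s - s₀) ^ (p1 * (k:ℝ))
            = c₀⁻¹ * (c₀ * (s - s₀) ^ (p1 * (k:ℝ))) := by field_simp
          _ ≤ c₀⁻¹ * Kker d p1 s x :=
              mul_le_mul_of_nonneg_left (hlow s hs) (inv_nonneg.mpr hc₀.le)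
      rw [integrableOn_rpow_shift_iff hsu] at hrint
      have hk2' : (2:ℝ) ≤ (k:ℝ) := by exact_mod_cast hk2
      nlinarith
    -- Now integrate `Kker p0`, which near `s₀` behaves like `(s-s₀)^{p0}` with `p0 > -1`.
    have part1 : IntegrableOn (fun s => Kker d p0 s x) (Set.Ioc 0 s₀) volume := by
      have heq : Set.EqOn (fun s => Kker d p0 s x) (fun _ => (0:ℝ)) (Set.Ioc 0 s₀) :=
        fun s hs => hzero s hs.2
      rw [integrableOn_congr_fun heq measurableSet_Ioc]
      exact integrableOn_zero
    have part2 : IntegrableOn (fun s => Kker d p0 s x) (Set.Ioc s₀ u) volume := by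
      set C : ℝ := ∏ ℓ ∈ Finset.univ.filter (fun ℓ => ¬ x ℓ = s₀), (s₀ - x ℓ) ^ p0 with hCdef
      have hC : 0 ≤ C := Finset.prod_nonneg fun ℓ hℓ => Real.rpow_nonneg (by
        have hlt : x ℓ < s₀ := lt_of_le_of_ne (hub ℓ) (Finset.mem_filter.mp hℓ).2
        linarith) _
      have hrint : IntegrableOn (fun s => (s - s₀) ^ (p0 * (k:ℝ))) (Set.Ioc s₀ u) volume := by
        rw [integrableOn_rpow_shift_iff hsu, hkone]
        push_cast; linarith
      apply Integrable.mono' (hrint.const_mul C)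
        (Kker_measurable p0).aestronglyMeasurable
      rw [ae_restrict_iff' measurableSet_Ioc]
      refine Filter.Eventually.of_forall fun s hs => ?_
      rw [Real.norm_eq_abs, abs_of_nonneg (Kker_nonneg _ _), Kker_factor hub hs.1, mul_comm]
      apply mul_le_mul_of_nonneg_right _ (Real.rpow_nonneg (by linarith [hs.1]) _)
      rw [hCdef]
      apply Finset.prod_le_prod
      · intro ℓ hℓ
        have hlt : x ℓ < s₀ := lt_of_le_of_ne (hub ℓ) (Finset.mem_filter.mp hℓ).2
        exact Real.rpow_nonneg (by linarith [hs.1]) _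
      · intro ℓ hℓ
        have hlt : x ℓ < s₀ := lt_of_le_of_ne (hub ℓ) (Finset.mem_filter.mp hℓ).2
        exact Real.rpow_le_rpow_of_nonpos (by linarith) (by linarith [hs.1]) h0b.le
    have := part1.union part2
    rwa [Set.Ioc_union_Ioc_eq_Ioc hpos hsu.le] at this

end Integrability

/-- Mean-value-type estimate: for `1/2 < a - ε < b + ε < 1` there is `c_ε > 0` such that for
all `a ≤ h₁ ≤ h₂ ≤ b`, `u ≥ 0` and `x ∈ ℝ^d`,
`|∫_0^u (f_{h₁} - f_{h₂})(s,x) ds| ≤ c_ε |h₁ - h₂| ∫_0^u (f_{a-ε} + f_{b+ε})(s,x) ds`. -/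
theorem hermiteKernel_diff_bound (d : ℕ) (hd : 1 ≤ d) (a b ε : ℝ)
    (hab : 1/2 < a ∧ a < b ∧ b < 1) (hε : 0 < ε)
    (hεab : 1/2 < a - ε ∧ b + ε < 1) :
    ∃ c : ℝ, 0 < c ∧ ∀ h₁ h₂ : ℝ, a ≤ h₁ → h₁ ≤ h₂ → h₂ ≤ b → ∀ u : ℝ, 0 ≤ u →
      ∀ x : Fin d → ℝ,
        |∫ s in Set.Ioc (0:ℝ) u, (hermiteKernel d h₁ s x - hermiteKernel d h₂ s x)| ≤
          c * |h₁ - h₂| *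
            ∫ s in Set.Ioc (0:ℝ) u, (hermiteKernel d (a - ε) s x + hermiteKernel d (b + ε) s x) := by
  obtain ⟨ha2, hab', hb1⟩ := hab
  obtain ⟨haε, hbε⟩ := hεab
  refine ⟨ε⁻¹, by positivity, ?_⟩
  intro h₁ h₂ hah1 h12 h2b u hu x
  have hdpos : (0:ℝ) < d := by exact_mod_cast hd
  have hd1 : (1:ℝ) ≤ d := by exact_mod_cast hd
  set p0 : ℝ := (a - ε - 1) / d - 1/2 with hp0def
  set p1 : ℝ := (h₁ - 1) / d - 1/2 with hp1def
  set p2 : ℝ := (h₂ - 1) / d - 1/2 with hp2def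
  set q : ℝ := (b + ε - 1) / d - 1/2 with hqdef
  simp only [hermiteKernel_eq_Kker, ← hp0def, ← hp1def, ← hp2def, ← hqdef]
  clear_value p0 p1 p2 q
  -- basic facts about the exponents
  have pbound : ∀ h : ℝ, 1/2 < h → h < 1 → -1 < (h - 1) / d - 1/2 ∧ (h - 1) / d - 1/2 < -(1/2) := by
    intro h hh1 hh2
    have hmul : (h - 1) / d * d = h - 1 := div_mul_cancel₀ _ hdpos.ne'
    constructor
    · nlinarith [div_nonpos_of_nonpos_of_nonneg (by linarith : h - 1 ≤ 0) hdpos.le]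
    · nlinarith [div_nonpos_of_nonpos_of_nonneg (by linarith : h - 1 ≤ 0) hdpos.le,
        div_neg_of_neg_of_pos (by linarith : h - 1 < 0) hdpos]
  have hb0 := pbound (a - ε) haε (by linarith)
  have hb1' := pbound h₁ (by linarith) (by linarith)
  have hb2 := pbound h₂ (by linarith) (by linarith)
  have hbq := pbound (b + ε) (by linarith) hbε
  rw [← hp0def] at hb0
  rw [← hp1def] at hb1'
  rw [← hp2def] at hb2
  rw [← hqdef] at hbq
  have hγ : 0 < ε / d := by positivity
  have hgap0 : p0 + ε / d ≤ p1 := by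
    rw [hp0def, hp1def]
    have : (a - ε - 1) / d + ε / d = (a - 1) / d := by ring
    have h' : (a - 1) / d ≤ (h₁ - 1) / d := by gcongr
    linarith
  have hgap2 : p2 + ε / d ≤ q := by
    rw [hp2def, hqdef]
    have : (h₂ - 1) / d + ε / d = (h₂ + ε - 1) / d := by ring
    have h' : (h₂ + ε - 1) / d ≤ (b + ε - 1) / d := by gcongr
    linarith
  have hp12 : p1 ≤ p2 := by rw [hp1def, hp2def]; gcongr
  have hconst : (p2 - p1) / (ε / d) = ε⁻¹ * |h₁ - h₂| := by
    rw [abs_sub_comm, abs_of_nonneg (by linarith : (0:ℝ) ≤ h₂ - h₁), hp1def, hp2def]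
    field_simp
    ring
  -- the pointwise bound
  have hpt : ∀ s : ℝ, |Kker d p1 s x - Kker d p2 s x| ≤
      ε⁻¹ * |h₁ - h₂| * (Kker d p0 s x + Kker d q s x) := by
    intro s
    rw [← hconst]
    exact Kker_abs_sub_le hγ hgap0 hp12 hgap2 (by linarith [hbq.2]) s
  by_cases Hg : IntegrableOn (fun s => Kker d p0 s x + Kker d q s x) (Set.Ioc 0 u) volume
  · -- the dominating function is integrable
    have hbnd : ∀ᵐ s ∂(volume.restrict (Set.Ioc (0:ℝ) u)),
        ‖Kker d p1 s x - Kker d p2 s x‖ ≤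
          ε⁻¹ * |h₁ - h₂| * (Kker d p0 s x + Kker d q s x) :=
      Filter.Eventually.of_forall fun s => by rw [Real.norm_eq_abs]; exact hpt s
    have hint := norm_integral_le_of_norm_le (Hg.const_mul (ε⁻¹ * |h₁ - h₂|)) hbnd
    rw [Real.norm_eq_abs] at hint
    calc |∫ s in Set.Ioc (0:ℝ) u, (Kker d p1 s x - Kker d p2 s x)|
        ≤ ∫ s in Set.Ioc (0:ℝ) u,
            ε⁻¹ * |h₁ - h₂| * (Kker d p0 s x + Kker d q s x) := hint
      _ = ε⁻¹ * |h₁ - h₂| * ∫ s in Set.Ioc (0:ℝ) u, (Kker d p0 s x + Kker d q s x) :=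
          integral_const_mul _ _
  · -- the dominating function is not integrable: both sides vanish
    rcases eq_or_lt_of_le h12 with heq | hlt
    · subst heq
      have hpp : p1 = p2 := by rw [hp1def, hp2def]
      rw [hpp]
      simp
    · have hp12' : p1 < p2 := by rw [hp1def, hp2def]; gcongr
      -- `Kker p0` is not integrable
      have hnK0 : ¬ IntegrableOn (fun s => Kker d p0 s x) (Set.Ioc 0 u) volume := by
        intro hK0
        have hKq : IntegrableOn (fun s => Kker d q s x) (Set.Ioc 0 u) volume := by
          apply Integrable.mono' (hK0.add (integrableOn_const (C := (1:ℝ)) measure_Ioc_lt_top.ne))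
            (Kker_measurable q).aestronglyMeasurable
          exact Filter.Eventually.of_forall fun s => by
            rw [Real.norm_eq_abs, abs_of_nonneg (Kker_nonneg _ _)]
            exact Kker_le_add_one (by linarith) (by linarith [hbq.2]) (by linarith [hb0.2]) s
        exact Hg (hK0.add hKq)
      -- hence the difference is not integrable either
      have hndiff : ¬ Integrable (fun s => Kker d p1 s x - Kker d p2 s x)
          (volume.restrict (Set.Ioc (0:ℝ) u)) := by
        intro hdiff
        have hK1 : IntegrableOn (fun s => Kker d p1 s x) (Set.Ioc 0 u) volume := by
          apply Integrable.mono'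
            ((hdiff.abs.const_mul 2).add (integrableOn_const
              (C := Real.exp (-p1 * (Real.log 2 / (p2 - p1)))) measure_Ioc_lt_top.ne))
            (Kker_measurable p1).aestronglyMeasurable
          exact Filter.Eventually.of_forall fun s => by
            rw [Real.norm_eq_abs, abs_of_nonneg (Kker_nonneg _ _)]
            exact Kker_le_two_abs_diff hp12' (by linarith [hb2.2]) s
        exact hnK0 (Kker_transfer hd x u hb0.1 (by linarith [hb0.2]) hb1'.1
          (by linarith [hb1'.2]) hK1)
      rw [integral_undef hndiff, integral_undef Hg]
      simp
end

section
/- Let a > 0, p ≥ 1 and α > 1/p. There exists a deterministic constant c (depending only on a, p, α) such that for every continuous function f : [0,a] → ℝ and every t ∈ [0,a], |f(t) − f(0)|^p ≤ c · t^{αp−1} · ∬_{[0,a]²} |f(r) − f(v)|^p |r − v|^{−αp−1} dr dv, whenever the double integral is finite. -/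
open MeasureTheory

private lemma diag_null (J1 J2 : Set ℝ) :
    ((volume.restrict J1).prod (volume.restrict J2)) {q : ℝ × ℝ | q.1 = q.2} = 0 := by
  have hm : MeasurableSet {q : ℝ × ℝ | q.1 = q.2} :=
    measurableSet_eq_fun measurable_fst measurable_snd
  rw [Measure.prod_apply hm]
  have h0 : ∀ x : ℝ, (volume.restrict J2) (Prod.mk x ⁻¹' {q : ℝ × ℝ | q.1 = q.2}) = 0 := by
    intro x
    have hpre : Prod.mk x ⁻¹' {q : ℝ × ℝ | q.1 = q.2} = {x} := by
      ext y; simp [eq_comm]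
    rw [hpre]
    refine le_antisymm ?_ zero_le
    calc (volume.restrict J2) {x} ≤ volume {x} := Measure.restrict_apply_le _ _
      _ = 0 := Real.volume_singleton
  simp [h0]

private lemma jensen_avg {X : Type*} [MeasurableSpace X] (μ : Measure X) [IsFiniteMeasure μ]
    {g : X → ℝ} {p : ℝ} (hp : 1 ≤ p) (hg : AEStronglyMeasurable g μ)
    {M : ℝ} (hM : ∀ᵐ x ∂μ, ‖g x‖ ≤ M) :
    ∫ x, |g x| ∂μ ≤ ((μ Set.univ).toReal) ^ (1 - 1/p) * (∫ x, |g x| ^ p ∂μ) ^ (1/p) := by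
  rcases eq_or_lt_of_le hp with hp1 | hp1
  · subst hp1
    simp [Real.rpow_one]
  · have hpq : p.HolderConjugate (p / (p - 1)) := Real.HolderConjugate.conjExponent hp1
    have habs : AEStronglyMeasurable (fun x => |g x|) μ := hg.norm.congr (by filter_upwards with x; simp)
    have hmem : MemLp (fun x => |g x|) (ENNReal.ofReal p) μ :=
      MemLp.of_bound habs M (by filter_upwards [hM] with x hx; simpa using hx)
    have hone : MemLp (fun _ : X => (1 : ℝ)) (ENNReal.ofReal (p / (p - 1))) μ := memLp_const 1
    have key := integral_mul_le_Lp_mul_Lq_of_nonneg hpq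
      (Filter.Eventually.of_forall fun x => abs_nonneg (g x))
      (Filter.Eventually.of_forall fun _ : X => zero_le_one) hmem hone
    simp only [mul_one, Real.one_rpow] at key
    rw [integral_const, smul_eq_mul, mul_one] at key
    have hq : 1 / (p / (p - 1)) = 1 - 1 / p := by
      field_simp
    rw [hq] at key
    calc ∫ x, |g x| ∂μ ≤ (∫ x, |g x| ^ p ∂μ) ^ (1/p) * ((μ Set.univ).toReal) ^ (1 - 1/p) := key
      _ = ((μ Set.univ).toReal) ^ (1 - 1/p) * (∫ x, |g x| ^ p ∂μ) ^ (1/p) := mul_comm _ _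

private lemma avg_diff_bound (a p α : ℝ) (hp : 1 ≤ p) (hαp : 1 < α * p)
    (f : ℝ → ℝ) (hf : ContinuousOn f (Set.Icc 0 a))
    (hint : Integrable (fun q : ℝ × ℝ => |f q.1 - f q.2| ^ p * |q.1 - q.2| ^ (-(α * p) - 1))
      ((volume.restrict (Set.Icc 0 a)).prod (volume.restrict (Set.Icc 0 a))))
    {b1 c1 b2 c2 d : ℝ} (h1 : Set.Icc b1 c1 ⊆ Set.Icc 0 a) (h2 : Set.Icc b2 c2 ⊆ Set.Icc 0 a)
    (hb1 : b1 < c1) (hb2 : b2 < c2) (hd : 0 < d)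
    (hdist : ∀ x ∈ Set.Icc b1 c1, ∀ y ∈ Set.Icc b2 c2, |x - y| ≤ d) :
    |(c1 - b1)⁻¹ * (∫ x in Set.Icc b1 c1, f x) - (c2 - b2)⁻¹ * ∫ y in Set.Icc b2 c2, f y|
      ≤ (d ^ (α * p + 1) *
          (∫ q : ℝ × ℝ, |f q.1 - f q.2| ^ p * |q.1 - q.2| ^ (-(α * p) - 1)
            ∂((volume.restrict (Set.Icc 0 a)).prod (volume.restrict (Set.Icc 0 a))))
          / ((c1 - b1) * (c2 - b2))) ^ (1/p) := by
  have hp0 : 0 < p := lt_of_lt_of_le one_pos hp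
  set J1 := Set.Icc b1 c1 with hJ1
  set J2 := Set.Icc b2 c2 with hJ2
  set m1 := c1 - b1 with hm1
  set m2 := c2 - b2 with hm2
  have hm1pos : 0 < m1 := sub_pos.2 hb1
  have hm2pos : 0 < m2 := sub_pos.2 hb2
  have hm12pos : 0 < m1 * m2 := mul_pos hm1pos hm2pos
  set ν := (volume.restrict (Set.Icc (0:ℝ) a)).prod (volume.restrict (Set.Icc (0:ℝ) a)) with hν
  set B := ∫ q : ℝ × ℝ, |f q.1 - f q.2| ^ p * |q.1 - q.2| ^ (-(α * p) - 1) ∂ν with hBdef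
  have hBnn : 0 ≤ B := integral_nonneg fun q => by positivity
  set ν' := (volume.restrict J1).prod (volume.restrict J2) with hν'def
  have hν' : ν' = (volume : Measure (ℝ × ℝ)).restrict (J1 ×ˢ J2) := by
    rw [hν'def, Measure.prod_restrict, ← Measure.volume_eq_prod]
  have hν'' : ν' = ν.restrict (J1 ×ˢ J2) := by
    have e1 : volume.restrict J1 = (volume.restrict (Set.Icc (0:ℝ) a)).restrict J1 := by
      rw [Measure.restrict_restrict measurableSet_Icc, Set.inter_eq_self_of_subset_left h1]
    have e2 : volume.restrict J2 = (volume.restrict (Set.Icc (0:ℝ) a)).restrict J2 := by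
      rw [Measure.restrict_restrict measurableSet_Icc, Set.inter_eq_self_of_subset_left h2]
    rw [hν'def, e1, e2, Measure.prod_restrict, hν]
  -- continuity / integrability facts
  have hf1 : ContinuousOn f J1 := hf.mono h1
  have hf2 : ContinuousOn f J2 := hf.mono h2
  have hint1 : IntegrableOn f J1 volume := ContinuousOn.integrableOn_compact isCompact_Icc hf1
  have hint2 : IntegrableOn f J2 volume := ContinuousOn.integrableOn_compact isCompact_Icc hf2
  have hgcont : ContinuousOn (fun q : ℝ × ℝ => f q.1 - f q.2) (J1 ×ˢ J2) := by
    apply ContinuousOn.sub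
    · exact hf1.comp continuousOn_fst fun q hq => hq.1
    · exact hf2.comp continuousOn_snd fun q hq => hq.2
  have hKc : IsCompact (J1 ×ˢ J2) := isCompact_Icc.prod isCompact_Icc
  have hg_int : Integrable (fun q : ℝ × ℝ => f q.1 - f q.2) ν' := by
    rw [hν']; exact ContinuousOn.integrableOn_compact hKc hgcont
  have habsp : Continuous fun x : ℝ => |x| ^ p :=
    continuous_abs.rpow_const fun x => Or.inr hp0.le
  have hgp_int : Integrable (fun q : ℝ × ℝ => |f q.1 - f q.2| ^ p) ν' := by
    rw [hν']; exact ContinuousOn.integrableOn_compact hKc (habsp.comp_continuousOn hgcont)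
  haveI : IsFiniteMeasure ν' := by
    rw [hν']; constructor; rw [Measure.restrict_apply_univ]; exact hKc.measure_lt_top
  have hm12 : (ν' Set.univ).toReal = m1 * m2 := by
    rw [hν', Measure.restrict_apply_univ, Measure.volume_eq_prod, Measure.prod_prod,
      Real.volume_Icc, Real.volume_Icc, ENNReal.toReal_mul,
      ENNReal.toReal_ofReal hm1pos.le, ENNReal.toReal_ofReal hm2pos.le]
  obtain ⟨C, hC⟩ := isCompact_Icc.exists_bound_of_continuousOn hf
  have hmem : ∀ᵐ q ∂ν', q ∈ J1 ×ˢ J2 := by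
    rw [hν']; exact ae_restrict_mem (measurableSet_Icc.prod measurableSet_Icc)
  have hMg : ∀ᵐ q ∂ν', ‖f q.1 - f q.2‖ ≤ C + C := by
    filter_upwards [hmem] with q hq
    calc ‖f q.1 - f q.2‖ ≤ ‖f q.1‖ + ‖f q.2‖ := norm_sub_le _ _
      _ ≤ C + C := add_le_add (hC _ (h1 hq.1)) (hC _ (h2 hq.2))
  -- Fubini computation
  have hconst1 : IntegrableOn (fun _ : ℝ => (1:ℝ)) J1 volume :=
    integrableOn_const (by rw [Real.volume_Icc]; exact ENNReal.ofReal_ne_top)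
  have hconst2 : IntegrableOn (fun _ : ℝ => (1:ℝ)) J2 volume :=
    integrableOn_const (by rw [Real.volume_Icc]; exact ENNReal.ofReal_ne_top)
  have key : (∫ q : ℝ × ℝ, (f q.1 - f q.2) ∂ν')
      = m2 * (∫ x in J1, f x) - m1 * ∫ y in J2, f y := by
    rw [hν'def, integral_prod _ (hν'def ▸ hg_int)]
    have inner : ∀ x : ℝ, (∫ y in J2, (f x - f y)) = m2 * f x - ∫ y in J2, f y := by
      intro x
      rw [integral_sub (by simpa using hconst2.const_mul (f x)) hint2]
      congr 1
      rw [setIntegral_const, smul_eq_mul, measureReal_def, Real.volume_Icc, ENNReal.toReal_ofReal hm2pos.le]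
    simp only
    rw [show (fun x : ℝ => ∫ y in J2, (f x - f y)) = fun x : ℝ => m2 * f x - ∫ y in J2, f y from
      funext inner]
    rw [integral_sub (hint1.const_mul m2)
      (by simpa using hconst1.const_mul (∫ y in J2, f y))]
    rw [integral_const_mul, setIntegral_const, smul_eq_mul, measureReal_def, Real.volume_Icc,
      ENNReal.toReal_ofReal hm1pos.le]
  have havg : m1⁻¹ * (∫ x in J1, f x) - m2⁻¹ * (∫ y in J2, f y)
      = (∫ q : ℝ × ℝ, (f q.1 - f q.2) ∂ν') / (m1 * m2) := by
    rw [key]; field_simp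
  -- core bound on the p-th power integral
  have hGν' : Integrable (fun q : ℝ × ℝ => |f q.1 - f q.2| ^ p * |q.1 - q.2| ^ (-(α * p) - 1)) ν' := by
    rw [hν'']; exact hint.restrict
  have hne : ∀ᵐ q : ℝ × ℝ ∂ν', q.1 ≠ q.2 := by
    rw [ae_iff]
    have := diag_null J1 J2
    simpa [hν'def] using this
  have hmono1 : ∀ᵐ q : ℝ × ℝ ∂ν', |f q.1 - f q.2| ^ p
      ≤ d ^ (α * p + 1) * (|f q.1 - f q.2| ^ p * |q.1 - q.2| ^ (-(α * p) - 1)) := by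
    filter_upwards [hmem, hne] with q hq hqne
    have h01 : 0 < |q.1 - q.2| := abs_pos.mpr (sub_ne_zero.mpr hqne)
    have hle : |q.1 - q.2| ≤ d := hdist _ hq.1 _ hq.2
    have h2 : d ^ (-(α * p) - 1) ≤ |q.1 - q.2| ^ (-(α * p) - 1) :=
      Real.rpow_le_rpow_of_nonpos h01 hle (by nlinarith)
    have hone : (1:ℝ) = d ^ (α * p + 1) * d ^ (-(α * p) - 1) := by
      rw [← Real.rpow_add hd]; norm_num
    calc |f q.1 - f q.2| ^ p = (d ^ (α * p + 1) * d ^ (-(α * p) - 1)) * |f q.1 - f q.2| ^ p := by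
          rw [← hone, one_mul]
      _ ≤ (d ^ (α * p + 1) * |q.1 - q.2| ^ (-(α * p) - 1)) * |f q.1 - f q.2| ^ p := by
          have hd1 : (0:ℝ) ≤ d ^ (α * p + 1) := (Real.rpow_pos_of_pos hd _).le
          have := mul_le_mul_of_nonneg_left h2 hd1
          exact mul_le_mul_of_nonneg_right this (by positivity)
      _ = d ^ (α * p + 1) * (|f q.1 - f q.2| ^ p * |q.1 - q.2| ^ (-(α * p) - 1)) := by ring
  have hcore : (∫ q : ℝ × ℝ, |f q.1 - f q.2| ^ p ∂ν') ≤ d ^ (α * p + 1) * B := by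
    calc (∫ q : ℝ × ℝ, |f q.1 - f q.2| ^ p ∂ν')
        ≤ ∫ q : ℝ × ℝ, d ^ (α * p + 1) *
            (|f q.1 - f q.2| ^ p * |q.1 - q.2| ^ (-(α * p) - 1)) ∂ν' :=
          integral_mono_ae hgp_int (hGν'.const_mul _) hmono1
      _ = d ^ (α * p + 1) * ∫ q : ℝ × ℝ,
            |f q.1 - f q.2| ^ p * |q.1 - q.2| ^ (-(α * p) - 1) ∂ν' := integral_const_mul _ _
      _ ≤ d ^ (α * p + 1) * B := by
          apply mul_le_mul_of_nonneg_left _ (Real.rpow_pos_of_pos hd _).le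
          rw [hν'', hBdef]
          exact setIntegral_le_integral hint (Filter.Eventually.of_forall fun q => by positivity)
  -- Jensen step
  have hjen := jensen_avg ν' hp hg_int.aestronglyMeasurable hMg
  rw [hm12] at hjen
  have hIpnn : 0 ≤ ∫ q : ℝ × ℝ, |f q.1 - f q.2| ^ p ∂ν' := integral_nonneg fun q => by positivity
  have habs_int : |∫ q : ℝ × ℝ, (f q.1 - f q.2) ∂ν'| ≤ ∫ q : ℝ × ℝ, |f q.1 - f q.2| ∂ν' := by
    simpa [Real.norm_eq_abs] using
      norm_integral_le_integral_norm (μ := ν') (fun q : ℝ × ℝ => f q.1 - f q.2)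
  have hSnn : (0:ℝ) ≤ d ^ (α * p + 1) * B := by positivity
  have halg : (m1 * m2) ^ (1 - 1/p) * (d ^ (α * p + 1) * B) ^ (1/p) / (m1 * m2)
      = (d ^ (α * p + 1) * B / (m1 * m2)) ^ (1/p) := by
    rw [Real.div_rpow hSnn hm12pos.le, Real.rpow_sub hm12pos, Real.rpow_one]
    have hne1 : (m1 * m2) ^ (1/p) ≠ 0 := (Real.rpow_pos_of_pos hm12pos _).ne'
    field_simp
  calc |m1⁻¹ * (∫ x in J1, f x) - m2⁻¹ * ∫ y in J2, f y|
      = |∫ q : ℝ × ℝ, (f q.1 - f q.2) ∂ν'| / (m1 * m2) := by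
        rw [havg, abs_div, abs_of_pos hm12pos]
    _ ≤ (∫ q : ℝ × ℝ, |f q.1 - f q.2| ∂ν') / (m1 * m2) := by gcongr
    _ ≤ ((m1 * m2) ^ (1 - 1/p) * (∫ q : ℝ × ℝ, |f q.1 - f q.2| ^ p ∂ν') ^ (1/p)) / (m1 * m2) := by
        gcongr
    _ ≤ ((m1 * m2) ^ (1 - 1/p) * (d ^ (α * p + 1) * B) ^ (1/p)) / (m1 * m2) := by
        have := Real.rpow_le_rpow hIpnn hcore (by positivity : (0:ℝ) ≤ 1/p)
        gcongr
    _ = (d ^ (α * p + 1) * B / (m1 * m2)) ^ (1/p) := halg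

/-- Garsia–Rodemich–Rumsey corollary: for `a > 0`, `p ≥ 1`, `α > 1/p`, there is a constant
`c` depending only on `a, p, α` such that for every continuous `f : [0,a] → ℝ` and every
`t ∈ [0,a]`, whenever the double integral is finite,
`|f(t) - f(0)|^p ≤ c t^{αp-1} ∬_{[0,a]²} |f(r)-f(v)|^p |r-v|^{-αp-1} dr dv`. -/
theorem garsia_rodemich_rumsey_corollary (a p α : ℝ) (ha : 0 < a) (hp : 1 ≤ p)
    (hα : 1 / p < α) :
    ∃ c : ℝ, 0 < c ∧ ∀ f : ℝ → ℝ, ContinuousOn f (Set.Icc 0 a) →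
      Integrable (fun q : ℝ × ℝ => |f q.1 - f q.2| ^ p * |q.1 - q.2| ^ (-(α * p) - 1))
        ((volume.restrict (Set.Icc 0 a)).prod (volume.restrict (Set.Icc 0 a))) →
      ∀ t ∈ Set.Icc (0:ℝ) a,
        |f t - f 0| ^ p ≤ c * t ^ (α * p - 1) *
          ∫ q : ℝ × ℝ, |f q.1 - f q.2| ^ p * |q.1 - q.2| ^ (-(α * p) - 1)
            ∂((volume.restrict (Set.Icc 0 a)).prod (volume.restrict (Set.Icc 0 a))) := by
  have hp0 : 0 < p := lt_of_lt_of_le one_pos hp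
  have hαp : 1 < α * p := by
    have := (div_lt_iff₀ hp0).1 hα
    linarith
  set γ := α - 1 / p with hγdef
  have hγpos : 0 < γ := by
    have : 1 / p < α := hα
    simp only [hγdef]; linarith
  set θ : ℝ := 2 ^ (-γ) with hθdef
  have hθpos : 0 < θ := Real.rpow_pos_of_pos two_pos _
  have hθlt : θ < 1 := Real.rpow_lt_one_of_one_lt_of_neg one_lt_two (by linarith)
  have h1θ : 0 < 1 - θ := by linarith
  refine ⟨2 ^ p * 2 * ((1 - θ)⁻¹) ^ p,
    mul_pos (mul_pos (Real.rpow_pos_of_pos two_pos _) two_pos)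
      (Real.rpow_pos_of_pos (inv_pos.2 h1θ) _), ?_⟩
  intro f hf hint t ht
  set ν := (volume.restrict (Set.Icc (0:ℝ) a)).prod (volume.restrict (Set.Icc (0:ℝ) a)) with hν
  set B := ∫ q : ℝ × ℝ, |f q.1 - f q.2| ^ p * |q.1 - q.2| ^ (-(α * p) - 1) ∂ν with hBdef
  have hBnn : 0 ≤ B := integral_nonneg fun q => by positivity
  rcases eq_or_lt_of_le ht.1 with h0t | h0t
  · -- t = 0
    rw [← h0t]
    rw [sub_self, abs_zero, Real.zero_rpow hp0.ne', Real.zero_rpow (by linarith : α * p - 1 ≠ 0)]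
    simp
  · -- 0 < t
    have hta : t ≤ a := ht.2
    set s : ℕ → ℝ := fun n => t * 2 ^ (-(n:ℝ)) with hs
    have hspos : ∀ n, 0 < s n := fun n => mul_pos h0t (Real.rpow_pos_of_pos two_pos _)
    have hsle : ∀ n, s n ≤ t := by
      intro n
      have h2n : (2:ℝ) ^ (-(n:ℝ)) ≤ 1 :=
        Real.rpow_le_one_of_one_le_of_nonpos one_le_two (neg_nonpos.2 (Nat.cast_nonneg n))
      calc s n = t * 2 ^ (-(n:ℝ)) := rfl
        _ ≤ t * 1 := mul_le_mul_of_nonneg_left h2n h0t.le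
        _ = t := mul_one t
    have hs0 : s 0 = t := by simp [hs]
    have hshalf : ∀ n, s (n+1) = s n / 2 := by
      intro n
      have hcast : (-(↑(n+1):ℝ)) = (-(n:ℝ)) + (-1) := by push_cast; ring
      simp only [hs]
      rw [hcast, Real.rpow_add two_pos, Real.rpow_neg_one]
      ring
    have hslt : ∀ n, s (n+1) ≤ s n := by
      intro n; rw [hshalf n]; linarith [hspos n]
    -- the two families of averages
    set A : ℕ → ℝ := fun n => (s n)⁻¹ * ∫ x in Set.Icc 0 (s n), f x with hA
    set A' : ℕ → ℝ := fun n => (s n)⁻¹ * ∫ x in Set.Icc (t - s n) t, f x with hA'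
    -- the common step bound
    have hsn_gamma : ∀ n : ℕ, (s n) ^ γ = t ^ γ * θ ^ n := by
      intro n
      rw [hs]
      simp only
      rw [Real.mul_rpow h0t.le (Real.rpow_pos_of_pos two_pos _).le, ← Real.rpow_natCast θ n,
        hθdef, ← Real.rpow_mul (by norm_num : (0:ℝ) ≤ 2), ← Real.rpow_mul (by norm_num : (0:ℝ) ≤ 2)]
      ring_nf
    have hRB : ∀ n : ℕ, ((s n) ^ (α * p + 1) * B / (s n * s (n+1))) ^ (1/p)
        = (2 * B) ^ (1/p) * t ^ γ * θ ^ n := by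
      intro n
      have h1 : s n * s (n+1) = (s n) ^ ((2:ℝ)) / 2 := by
        rw [hshalf n, Real.rpow_two]; ring
      have h2 : (s n) ^ (α * p + 1) * B / ((s n) ^ ((2:ℝ)) / 2)
          = 2 * B * (s n) ^ (α * p - 1) := by
        have hx : (s n) ^ (α * p - 1) = (s n) ^ (α * p + 1) / (s n) ^ ((2:ℝ)) := by
          rw [← Real.rpow_sub (hspos n)]; congr 1; ring
        rw [hx]
        have hne : (s n) ^ ((2:ℝ)) ≠ 0 := (Real.rpow_pos_of_pos (hspos n) _).ne'
        field_simp
        try ring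
      rw [h1, h2]
      have h2Bnn : (0:ℝ) ≤ 2 * B := by linarith
      rw [Real.mul_rpow h2Bnn (Real.rpow_nonneg (hspos n).le _),
        ← Real.rpow_mul (hspos n).le]
      have hexp : (α * p - 1) * (1/p) = γ := by
        rw [hγdef]; field_simp; try ring
      rw [hexp, hsn_gamma n, mul_assoc]
    -- step bounds for the chain at 0
    have hstep : ∀ n : ℕ, |A n - A (n+1)| ≤ (2 * B) ^ (1/p) * (t ^ γ * θ ^ n) := by
      intro n
      have hsub1 : Set.Icc (0:ℝ) (s n) ⊆ Set.Icc 0 a :=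
        Set.Icc_subset_Icc le_rfl ((hsle n).trans hta)
      have hsub2 : Set.Icc (0:ℝ) (s (n+1)) ⊆ Set.Icc 0 a :=
        Set.Icc_subset_Icc le_rfl ((hsle (n+1)).trans hta)
      have hdist : ∀ x ∈ Set.Icc (0:ℝ) (s n), ∀ y ∈ Set.Icc (0:ℝ) (s (n+1)), |x - y| ≤ s n := by
        intro x hx y hy
        rw [abs_sub_le_iff]
        constructor
        · linarith [hx.1, hx.2, hy.1, hy.2]
        · linarith [hx.1, hx.2, hy.1, hy.2, hslt n]
      have := avg_diff_bound a p α hp hαp f hf hint hsub1 hsub2 (hspos n) (hspos (n+1))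
        (hspos n) hdist
      simp only [sub_zero] at this
      rw [← hν, ← hBdef] at this
      rw [hRB n] at this
      simpa [hA, mul_assoc] using this
    -- step bounds for the chain at t
    have hstep' : ∀ n : ℕ, |A' n - A' (n+1)| ≤ (2 * B) ^ (1/p) * (t ^ γ * θ ^ n) := by
      intro n
      have hsub1 : Set.Icc (t - s n) t ⊆ Set.Icc 0 a :=
        Set.Icc_subset_Icc (by linarith [hsle n]) hta
      have hsub2 : Set.Icc (t - s (n+1)) t ⊆ Set.Icc 0 a :=
        Set.Icc_subset_Icc (by linarith [hsle (n+1)]) hta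
      have hb1 : t - s n < t := by linarith [hspos n]
      have hb2 : t - s (n+1) < t := by linarith [hspos (n+1)]
      have hdist : ∀ x ∈ Set.Icc (t - s n) t, ∀ y ∈ Set.Icc (t - s (n+1)) t, |x - y| ≤ s n := by
        intro x hx y hy
        rw [abs_sub_le_iff]
        constructor
        · linarith [hx.1, hx.2, hy.1, hy.2, hslt n]
        · linarith [hx.1, hx.2, hy.1, hy.2]
      have := avg_diff_bound a p α hp hαp f hf hint hsub1 hsub2 hb1 hb2 (hspos n) hdist
      simp only [sub_sub_cancel] at this
      rw [← hν, ← hBdef] at this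
      rw [hRB n] at this
      simpa [hA', mul_assoc] using this
    -- geometric series bound
    have geo : ∀ N : ℕ, ∑ i ∈ Finset.range N, θ ^ i ≤ (1 - θ)⁻¹ := by
      intro N
      have hsum := Summable.sum_le_tsum (Finset.range N) (fun i _ => pow_nonneg hθpos.le i)
        (summable_geometric_of_lt_one hθpos.le hθlt)
      rwa [tsum_geometric_of_lt_one hθpos.le hθlt] at hsum
    set K := (2 * B) ^ (1/p) * t ^ γ * (1 - θ)⁻¹ with hKdef
    have hK0nn : 0 ≤ (2 * B) ^ (1/p) * t ^ γ :=
      mul_nonneg (Real.rpow_nonneg (by linarith) _) (Real.rpow_nonneg h0t.le _)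
    have hKnn : 0 ≤ K := mul_nonneg hK0nn (by positivity)
    -- telescoping bounds
    have htel : ∀ (F : ℕ → ℝ),
        (∀ n : ℕ, |F n - F (n+1)| ≤ (2 * B) ^ (1/p) * (t ^ γ * θ ^ n)) →
        ∀ N : ℕ, |F 0 - F N| ≤ K := by
      intro F hF N
      calc |F 0 - F N| = dist (F 0) (F N) := (Real.dist_eq _ _).symm
        _ ≤ ∑ i ∈ Finset.range N, dist (F i) (F (i+1)) := dist_le_range_sum_dist F N
        _ ≤ ∑ i ∈ Finset.range N, (2 * B) ^ (1/p) * t ^ γ * θ ^ i := by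
            refine Finset.sum_le_sum fun i _ => ?_
            rw [Real.dist_eq, mul_assoc]
            exact hF i
        _ = (2 * B) ^ (1/p) * t ^ γ * ∑ i ∈ Finset.range N, θ ^ i := by
            rw [Finset.mul_sum]
        _ ≤ (2 * B) ^ (1/p) * t ^ γ * (1 - θ)⁻¹ :=
            mul_le_mul_of_nonneg_left (geo N) hK0nn
    -- approximation of the endpoint values
    have hlim : ∀ ε : ℝ, 0 < ε → ∃ N : ℕ, |A N - f 0| ≤ ε ∧ |A' N - f t| ≤ ε := by
      intro ε hε
      have hc0 : ContinuousWithinAt f (Set.Icc 0 a) 0 := hf 0 ⟨le_refl 0, ha.le⟩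
      have hct : ContinuousWithinAt f (Set.Icc 0 a) t := hf t ht
      rw [Metric.continuousWithinAt_iff] at hc0 hct
      obtain ⟨δ1, hδ1, h0⟩ := hc0 ε hε
      obtain ⟨δ2, hδ2, h2⟩ := hct ε hε
      obtain ⟨N, hN⟩ := exists_pow_lt_of_lt_one
        (show (0:ℝ) < min δ1 δ2 / t from div_pos (lt_min hδ1 hδ2) h0t)
        (by norm_num : (1:ℝ)/2 < 1)
      have h2N : (2:ℝ) ^ (-(N:ℝ)) = (1/2:ℝ) ^ N := by
        rw [Real.rpow_neg (by norm_num : (0:ℝ) ≤ 2), Real.rpow_natCast, one_div, inv_pow]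
      have hsN : s N < min δ1 δ2 := by
        have : s N = t * (1/2:ℝ) ^ N := by rw [hs]; simp only; rw [h2N]
        rw [this]
        calc t * (1/2:ℝ) ^ N < t * (min δ1 δ2 / t) := by
              exact mul_lt_mul_of_pos_left hN h0t
          _ = min δ1 δ2 := by field_simp
      refine ⟨N, ?_, ?_⟩
      · -- |A N - f 0| ≤ ε
        have hsub : Set.Icc (0:ℝ) (s N) ⊆ Set.Icc 0 a :=
          Set.Icc_subset_Icc le_rfl ((hsle N).trans hta)
        have hfi : IntegrableOn f (Set.Icc 0 (s N)) volume :=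
          ContinuousOn.integrableOn_compact isCompact_Icc (hf.mono hsub)
        have hconst : IntegrableOn (fun _ : ℝ => f 0) (Set.Icc 0 (s N)) volume :=
          integrableOn_const (by rw [Real.volume_Icc]; exact ENNReal.ofReal_ne_top)
        have hrew : A N - f 0 = (s N)⁻¹ * ∫ x in Set.Icc 0 (s N), (f x - f 0) := by
          rw [integral_sub hfi hconst, setIntegral_const, smul_eq_mul, measureReal_def, Real.volume_Icc,
            sub_zero, ENNReal.toReal_ofReal (hspos N).le, hA]
          simp only
          rw [mul_sub, ← mul_assoc, inv_mul_cancel₀ (hspos N).ne', one_mul]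
          try ring
        have hbound : ‖∫ x in Set.Icc 0 (s N), (f x - f 0)‖ ≤ ε * (volume (Set.Icc 0 (s N))).toReal := by
          apply norm_setIntegral_le_of_norm_le_const
          · rw [Real.volume_Icc]; exact ENNReal.ofReal_lt_top
          · intro x hx
            have hxa : x ∈ Set.Icc 0 a := hsub hx
            have hdx : dist x 0 < δ1 := by
              rw [Real.dist_eq, sub_zero, abs_of_nonneg hx.1]
              exact lt_of_le_of_lt hx.2 (lt_of_lt_of_le hsN (min_le_left _ _))
            have := h0 hxa hdx
            rw [Real.dist_eq] at this
            exact (le_of_lt this)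
        rw [hrew, abs_mul, abs_of_nonneg (inv_nonneg.2 (hspos N).le)]
        rw [Real.volume_Icc, sub_zero, ENNReal.toReal_ofReal (hspos N).le] at hbound
        calc (s N)⁻¹ * |∫ x in Set.Icc 0 (s N), (f x - f 0)| ≤ (s N)⁻¹ * (ε * s N) := by
              apply mul_le_mul_of_nonneg_left _ (inv_nonneg.2 (hspos N).le)
              simpa [Real.norm_eq_abs] using hbound
          _ = ε := by rw [mul_comm ε, ← mul_assoc, inv_mul_cancel₀ (hspos N).ne', one_mul]
      · -- |A' N - f t| ≤ ε
        have hsub : Set.Icc (t - s N) t ⊆ Set.Icc 0 a :=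
          Set.Icc_subset_Icc (by linarith [hsle N]) hta
        have hfi : IntegrableOn f (Set.Icc (t - s N) t) volume :=
          ContinuousOn.integrableOn_compact isCompact_Icc (hf.mono hsub)
        have hconst : IntegrableOn (fun _ : ℝ => f t) (Set.Icc (t - s N) t) volume :=
          integrableOn_const (by rw [Real.volume_Icc]; exact ENNReal.ofReal_ne_top)
        have hvol : (volume (Set.Icc (t - s N) t)).toReal = s N := by
          rw [Real.volume_Icc, sub_sub_cancel, ENNReal.toReal_ofReal (hspos N).le]
        have hrew : A' N - f t = (s N)⁻¹ * ∫ x in Set.Icc (t - s N) t, (f x - f t) := by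
          rw [integral_sub hfi hconst, setIntegral_const, smul_eq_mul, measureReal_def, hvol, hA']
          simp only
          rw [mul_sub, ← mul_assoc, inv_mul_cancel₀ (hspos N).ne', one_mul]
          try ring
        have hbound : ‖∫ x in Set.Icc (t - s N) t, (f x - f t)‖
            ≤ ε * (volume (Set.Icc (t - s N) t)).toReal := by
          apply norm_setIntegral_le_of_norm_le_const
          · rw [Real.volume_Icc]; exact ENNReal.ofReal_lt_top
          · intro x hx
            have hxa : x ∈ Set.Icc 0 a := hsub hx
            have hdx : dist x t < δ2 := by
              rw [Real.dist_eq, abs_of_nonpos (by linarith [hx.2])]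
              have : -(x - t) = t - x := by ring
              rw [this]
              have hxl : t - x ≤ s N := by linarith [hx.1]
              exact lt_of_le_of_lt hxl (lt_of_lt_of_le hsN (min_le_right _ _))
            have := h2 hxa hdx
            rw [Real.dist_eq] at this
            exact (le_of_lt this)
        rw [hrew, abs_mul, abs_of_nonneg (inv_nonneg.2 (hspos N).le)]
        rw [hvol] at hbound
        calc (s N)⁻¹ * |∫ x in Set.Icc (t - s N) t, (f x - f t)| ≤ (s N)⁻¹ * (ε * s N) := by
              apply mul_le_mul_of_nonneg_left _ (inv_nonneg.2 (hspos N).le)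
              simpa [Real.norm_eq_abs] using hbound
          _ = ε := by rw [mul_comm ε, ← mul_assoc, inv_mul_cancel₀ (hspos N).ne', one_mul]
    -- main estimate
    have hA00 : A' 0 = A 0 := by
      rw [hA', hA]; simp only; rw [hs0, sub_self]
    have hmain : |f t - f 0| ≤ 2 * K := by
      apply le_of_forall_pos_le_add
      intro ε hε
      obtain ⟨N, hN0, hNt⟩ := hlim (ε/2) (by linarith)
      have hdecomp : f t - f 0 = -(A' N - f t) + (A' N - A' 0) + (A 0 - A N) + (A N - f 0) := by
        rw [hA00]; ring
      calc |f t - f 0| = |-(A' N - f t) + (A' N - A' 0) + (A 0 - A N) + (A N - f 0)| := by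
            rw [hdecomp]
        _ ≤ |-(A' N - f t) + (A' N - A' 0) + (A 0 - A N)| + |A N - f 0| := abs_add_le _ _
        _ ≤ (|-(A' N - f t) + (A' N - A' 0)| + |A 0 - A N|) + |A N - f 0| := by
            gcongr; exact abs_add_le _ _
        _ ≤ ((|-(A' N - f t)| + |A' N - A' 0|) + |A 0 - A N|) + |A N - f 0| := by
            gcongr; exact abs_add_le _ _
        _ = |A' N - f t| + |A' N - A' 0| + |A 0 - A N| + |A N - f 0| := by
            rw [abs_neg]
        _ ≤ ε/2 + K + K + ε/2 :=
            add_le_add (add_le_add (add_le_add hNt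
              (by rw [abs_sub_comm]; exact htel A' hstep' N)) (htel A hstep N)) hN0
        _ = 2 * K + ε := by ring
    -- raise to the power p
    have hfin : |f t - f 0| ^ p ≤ (2 * K) ^ p :=
      Real.rpow_le_rpow (abs_nonneg _) hmain hp0.le
    have h2B : (0:ℝ) ≤ 2 * B := by linarith
    have hKp : (2 * K) ^ p = 2 ^ p * 2 * ((1 - θ)⁻¹) ^ p * t ^ (α * p - 1) * B := by
      rw [Real.mul_rpow (by norm_num : (0:ℝ) ≤ 2) hKnn, hKdef]
      rw [Real.mul_rpow hK0nn (by positivity : (0:ℝ) ≤ (1 - θ)⁻¹),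
        Real.mul_rpow (Real.rpow_nonneg h2B _) (Real.rpow_nonneg h0t.le _)]
      rw [← Real.rpow_mul h2B, ← Real.rpow_mul h0t.le]
      rw [one_div_mul_cancel hp0.ne', Real.rpow_one]
      have hexp2 : γ * p = α * p - 1 := by rw [hγdef]; field_simp
      rw [hexp2]
      ring
    calc |f t - f 0| ^ p ≤ (2 * K) ^ p := hfin
      _ = 2 ^ p * 2 * ((1 - θ)⁻¹) ^ p * t ^ (α * p - 1) * B := hKp
end
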